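/- arXiv:1701.02833 — 3 statements merged into one kernel-verified Lean document; each statement's English description precedes it below -/
import Mathlib

section
/- Let U be a real Hilbert space, Φ₂ a bounded self-adjoint linear operator on U, φ₁ ∈ U and φ₀ ∈ ℝ, and define J(u) = ⟨Φ₂ u, u⟩ + 2⟨u, φ₁⟩ + φ₀. Then J attains a minimum on U (i.e., there exists ū ∈ U with J(ū) ≤ J(u) for all u ∈ U) if and only if ⟨Φ₂ u, u⟩ ≥ 0 for all u ∈ U and φ₁ lies in the range of Φ₂. -/
open scoped RealInnerProductSpace

/-- Let `U` be a real Hilbert space, `Φ₂` a bounded self-adjoint linear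
operator on `U`, `φ₁ ∈ U`, `φ₀ ∈ ℝ`, and `J u = ⟪Φ₂ u, u⟫ + 2⟪u, φ₁⟫ + φ₀`.  Then `J`
attains a minimum on `U` iff `⟪Φ₂ u, u⟫ ≥ 0` for all `u` and `φ₁` lies in the range of `Φ₂`. -/
theorem quadratic_functional_attains_min_iff
    {U : Type*} [NormedAddCommGroup U] [InnerProductSpace ℝ U] [CompleteSpace U]
    (Φ₂ : U →L[ℝ] U) (hΦ₂ : ∀ u v : U, ⟪Φ₂ u, v⟫ = ⟪u, Φ₂ v⟫)
    (φ₁ : U) (φ₀ : ℝ) (J : U → ℝ)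
    (hJ : ∀ u : U, J u = ⟪Φ₂ u, u⟫ + 2 * ⟪u, φ₁⟫ + φ₀) :
    (∃ ubar : U, ∀ u : U, J ubar ≤ J u) ↔
      ((∀ u : U, 0 ≤ ⟪Φ₂ u, u⟫) ∧ φ₁ ∈ Set.range Φ₂) := by
  have key : ∀ v h : U, J (v + h) = J v + ⟪Φ₂ h, h⟫ + 2 * ⟪Φ₂ v + φ₁, h⟫ := by
    intro v h
    have h1 : ⟪Φ₂ h, v⟫ = ⟪Φ₂ v, h⟫ := by rw [hΦ₂ h v, real_inner_comm]
    have h2 : ⟪h, φ₁⟫ = ⟪φ₁, h⟫ := by rw [real_inner_comm]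
    simp only [hJ, map_add, inner_add_left, inner_add_right]
    linarith
  constructor
  · rintro ⟨ub, hub⟩
    have ht : ∀ (u : U) (t : ℝ),
        0 ≤ ⟪Φ₂ u, u⟫ * t ^ 2 + 2 * (⟪Φ₂ ub + φ₁, u⟫ * t) := by
      intro u t
      have h0 := hub (ub + t • u)
      rw [key ub (t • u)] at h0
      have e1 : ⟪Φ₂ (t • u), t • u⟫ = ⟪Φ₂ u, u⟫ * t ^ 2 := by
        rw [map_smul]
        simp [inner_smul_left, inner_smul_right]
        ring
      have e2 : ⟪Φ₂ ub + φ₁, t • u⟫ = ⟪Φ₂ ub + φ₁, u⟫ * t := by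
        rw [inner_smul_right]; ring
      rw [e1, e2] at h0
      linarith
    have hb : ∀ u : U, ⟪Φ₂ ub + φ₁, u⟫ = 0 := by
      intro u
      by_contra hne
      set a := ⟪Φ₂ u, u⟫ with ha
      set b := ⟪Φ₂ ub + φ₁, u⟫ with hbdef
      have hbb : 0 < b ^ 2 := by positivity
      have h1 := ht u (-b * (1 / (|a| + 1)))
      have hpos : (0:ℝ) < |a| + 1 := by positivity
      have haa : a ≤ |a| := le_abs_self a
      have h2 : a * (1 / (|a| + 1)) ≤ 1 := by
        rw [mul_one_div, div_le_one hpos]; linarith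
      nlinarith [sq_nonneg b, mul_pos hbb (one_div_pos.mpr hpos)]
    have hΦub : Φ₂ ub + φ₁ = 0 := by
      have := hb (Φ₂ ub + φ₁)
      exact inner_self_eq_zero.mp this
    refine ⟨fun u => ?_, ⟨-ub, ?_⟩⟩
    · have h0 := hub (ub + u)
      rw [key ub u, hb u] at h0
      linarith
    · rw [map_neg]
      have h3 : Φ₂ ub = -φ₁ := eq_neg_of_add_eq_zero_left hΦub
      rw [h3, neg_neg]
  · rintro ⟨hpos, v, hv⟩
    refine ⟨-v, fun u => ?_⟩
    have hz : Φ₂ (-v) + φ₁ = 0 := by rw [map_neg, hv]; abel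
    have h0 := key (-v) (u + v)
    have he : -v + (u + v) = u := by abel
    rw [he, hz] at h0
    simp only [inner_zero_left] at h0
    have := hpos (u + v)
    linarith
end

section
/- Let (Ω, 𝓕, P) be a probability space, G : Ω → ℝⁿˣⁿ measurable and essentially bounded, (G̃ₖ)ₖ∈ℕ and (Ḡₖ)ₖ∈ℕ sequences of measurable ℝⁿˣⁿ-valued random variables with ∑ₖ E|G̃ₖ|² < ∞ and ∑ₖ E|Ḡₖ|² < ∞, and (Ĝᵢⱼ)ᵢ,ⱼ∈ℕ a family of integrable ℝⁿˣⁿ-valued random variables with ∑ᵢ,ⱼ |E[Ĝᵢⱼ]|² < ∞. Define the bounded linear operator 𝒢 on L²(Ω; ℝⁿ) by 𝒢ξ = Gξ + ∑ₖ G̃ₖᵀ E[Ḡₖ ξ] + ∑ₖ Ḡₖᵀ E[G̃ₖ ξ] + ∑ᵢ,ⱼ G̃ᵢᵀ E[Ĝᵢⱼ] E[G̃ⱼ ξ]. If G(ω)ᵀ = G(ω) for P-a.e. ω and E[Ĝᵢⱼ]ᵀ = E[Ĝⱼᵢ] for all i, j, then 𝒢 is self-adjoint, i.e., E[⟨𝒢ξ,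 η⟩] = E[⟨ξ, 𝒢η⟩] for all ξ, η ∈ L²(Ω; ℝⁿ). -/
open MeasureTheory Filter
open scoped RealInnerProductSpace

/-- Matrix–vector multiplication, viewed as a map between Euclidean spaces. -/
noncomputable def matVec {n m : ℕ} (M : Matrix (Fin n) (Fin m) ℝ)
    (v : EuclideanSpace ℝ (Fin m)) : EuclideanSpace ℝ (Fin n) :=
  (WithLp.equiv 2 (Fin n → ℝ)).symm (M.mulVec ((WithLp.equiv 2 (Fin m → ℝ)) v))

/-- Square of the Frobenius norm of a real matrix. -/
def frobSq {n m : ℕ} (M : Matrix (Fin n) (Fin m) ℝ) : ℝ := ∑ i, ∑ j, (M i j) ^ 2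

/-- Frobenius norm of a real matrix. -/
noncomputable def frob {n m : ℕ} (M : Matrix (Fin n) (Fin m) ℝ) : ℝ :=
  Real.sqrt (frobSq M)

/-- Entrywise expectation of a matrix-valued random variable. -/
noncomputable def matExp {n m : ℕ} {Ω : Type*} [MeasurableSpace Ω] (P : MeasureTheory.Measure Ω)
    (M : Ω → Matrix (Fin n) (Fin m) ℝ) : Matrix (Fin n) (Fin m) ℝ :=
  Matrix.of fun a b => ∫ ω, M ω a b ∂P

/-- Pointwise action of the mean-field operator
`𝒢ξ = Gξ + ∑ₖ G̃ₖᵀ E[Ḡₖ ξ] + ∑ₖ Ḡₖᵀ E[G̃ₖ ξ] + ∑ᵢⱼ G̃ᵢᵀ E[Ĝᵢⱼ] E[G̃ⱼ ξ]`. -/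
noncomputable def meanFieldG {n : ℕ} {Ω : Type*} [MeasurableSpace Ω]
    (P : MeasureTheory.Measure Ω)
    (G : Ω → Matrix (Fin n) (Fin n) ℝ) (Gtil Gbar : ℕ → Ω → Matrix (Fin n) (Fin n) ℝ)
    (Ghat : ℕ → ℕ → Ω → Matrix (Fin n) (Fin n) ℝ)
    (ξ : Ω → EuclideanSpace ℝ (Fin n)) (ω : Ω) : EuclideanSpace ℝ (Fin n) :=
  matVec (G ω) (ξ ω) +
    (∑' k, matVec (Gtil k ω).transpose (∫ ω', matVec (Gbar k ω') (ξ ω') ∂P)) +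
    (∑' k, matVec (Gbar k ω).transpose (∫ ω', matVec (Gtil k ω') (ξ ω') ∂P)) +
    ∑' p : ℕ × ℕ, matVec (Gtil p.1 ω).transpose
      (matVec (matExp P (Ghat p.1 p.2)) (∫ ω', matVec (Gtil p.2 ω') (ξ ω') ∂P))

section Aux
open scoped ENNReal NNReal

lemma frobSq_nonneg {n m : ℕ} (M : Matrix (Fin n) (Fin m) ℝ) : 0 ≤ frobSq M := by
  unfold frobSq; positivity

lemma frob_nonneg {n m : ℕ} (M : Matrix (Fin n) (Fin m) ℝ) : 0 ≤ frob M := Real.sqrt_nonneg _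

lemma frob_sq_eq {n m : ℕ} (M : Matrix (Fin n) (Fin m) ℝ) : frob M ^ 2 = frobSq M :=
  Real.sq_sqrt (frobSq_nonneg M)

lemma frobSq_transpose {n m : ℕ} (M : Matrix (Fin n) (Fin m) ℝ) :
    frobSq M.transpose = frobSq M := by
  unfold frobSq; rw [Finset.sum_comm]; simp [Matrix.transpose_apply]

lemma frob_transpose {n m : ℕ} (M : Matrix (Fin n) (Fin m) ℝ) :
    frob M.transpose = frob M := by
  unfold frob; rw [frobSq_transpose]

lemma matVec_apply {n m : ℕ} (M : Matrix (Fin n) (Fin m) ℝ) (v : EuclideanSpace ℝ (Fin m))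
    (i : Fin n) : matVec M v i = ∑ j, M i j * v j := rfl

lemma matVec_inner {n m : ℕ} (M : Matrix (Fin n) (Fin m) ℝ) (v : EuclideanSpace ℝ (Fin m))
    (w : EuclideanSpace ℝ (Fin n)) : ⟪matVec M v, w⟫ = ⟪v, matVec M.transpose w⟫ := by
  simp only [PiLp.inner_apply, RCLike.inner_apply, starRingEnd_apply, star_trivial,
    matVec_apply, Matrix.transpose_apply, Finset.sum_mul, Finset.mul_sum]
  rw [Finset.sum_comm]
  congr 1; ext i; congr 1; ext j; ring

lemma norm_matVec_le {n m : ℕ} (M : Matrix (Fin n) (Fin m) ℝ) (v : EuclideanSpace ℝ (Fin m)) :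
    ‖matVec M v‖ ≤ frob M * ‖v‖ := by
  have h1 : ‖matVec M v‖ ^ 2 ≤ frobSq M * ‖v‖ ^ 2 := by
    rw [EuclideanSpace.norm_eq, Real.sq_sqrt (by positivity), EuclideanSpace.norm_eq,
      Real.sq_sqrt (by positivity)]
    unfold frobSq
    rw [Finset.sum_mul]
    refine Finset.sum_le_sum fun i _ => ?_
    simp only [Real.norm_eq_abs, sq_abs, matVec_apply]
    exact Finset.sum_mul_sq_le_sq_mul_sq Finset.univ _ _
  have h2 : 0 ≤ frob M * ‖v‖ := mul_nonneg (frob_nonneg M) (norm_nonneg v)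
  calc ‖matVec M v‖ = Real.sqrt (‖matVec M v‖ ^ 2) := (Real.sqrt_sq (norm_nonneg _)).symm
    _ ≤ Real.sqrt (frobSq M * ‖v‖ ^ 2) := Real.sqrt_le_sqrt h1
    _ = frob M * ‖v‖ := by
        rw [Real.sqrt_mul (frobSq_nonneg M), Real.sqrt_sq (norm_nonneg _)]; rfl

lemma matVec_eq_sum {n m : ℕ} (M : Matrix (Fin n) (Fin m) ℝ) (v : EuclideanSpace ℝ (Fin m)) :
    matVec M v = ∑ i, (∑ j, M i j * v j) • EuclideanSpace.single i (1 : ℝ) := by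
  ext a
  rw [matVec_apply]
  have : (∑ i, (∑ j, M i j * v j) • EuclideanSpace.single i (1 : ℝ)) a
      = ∑ i, ((∑ j, M i j * v j) • EuclideanSpace.single i (1 : ℝ)) a := by
    rw [WithLp.ofLp_sum]; exact Finset.sum_apply a Finset.univ _
  rw [this]
  simp [EuclideanSpace.single_apply, mul_comm]

lemma matVec_aesm {n m : ℕ} {Ω : Type*} [MeasurableSpace Ω] {P : Measure Ω}
    {F : Ω → Matrix (Fin n) (Fin m) ℝ} (hF : ∀ i j, Measurable fun ω => F ω i j)
    {ξ : Ω → EuclideanSpace ℝ (Fin m)} (hξ : AEStronglyMeasurable ξ P) :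
    AEStronglyMeasurable (fun ω => matVec (F ω) (ξ ω)) P := by
  simp only [matVec_eq_sum]
  refine Finset.aestronglyMeasurable_fun_sum _ fun i _ => ?_
  refine AEStronglyMeasurable.fun_smul (𝕜 := ℝ) ?_ (aestronglyMeasurable_const (b := EuclideanSpace.single i (1:ℝ)))
  refine Finset.aestronglyMeasurable_fun_sum _ fun j _ => ?_
  exact ((hF i j).aestronglyMeasurable).mul
    ((EuclideanSpace.proj j : EuclideanSpace ℝ (Fin m) →L[ℝ] ℝ).continuous.comp_aestronglyMeasurable hξ)

lemma frob_measurable {n m : ℕ} {Ω : Type*} [MeasurableSpace Ω]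
    {F : Ω → Matrix (Fin n) (Fin m) ℝ} (hF : ∀ i j, Measurable fun ω => F ω i j) :
    Measurable fun ω => frob (F ω) := by
  apply Measurable.comp Real.continuous_sqrt.measurable
  unfold frobSq
  exact Finset.measurable_sum _ fun i _ => Finset.measurable_sum _ fun j _ => (hF i j).pow_const 2

section IntLemmas
variable {Ω : Type*} [MeasurableSpace Ω] {P : Measure Ω}

lemma integrable_mul_L2 {f g : Ω → ℝ} (hf : MemLp f 2 P) (hg : MemLp g 2 P) :
    Integrable (fun ω => f ω * g ω) P := by
  rw [← memLp_one_iff_integrable]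
  have h := hg.smul (𝕜 := ℝ) hf (r := 1)
  exact h

lemma integral_mul_sqrt {f g : Ω → ℝ} (hf0 : ∀ ω, 0 ≤ f ω) (hg0 : ∀ ω, 0 ≤ g ω)
    (hf : MemLp f 2 P) (hg : MemLp g 2 P) :
    ∫ ω, f ω * g ω ∂P ≤ Real.sqrt (∫ ω, f ω ^ 2 ∂P) * Real.sqrt (∫ ω, g ω ^ 2 ∂P) := by
  have conj : Real.HolderConjugate 2 2 := Real.HolderConjugate.two_two
  have h2 : ENNReal.ofReal (2:ℝ) = 2 := by norm_num
  have := integral_mul_le_Lp_mul_Lq_of_nonneg (μ := P) conj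
    (Eventually.of_forall hf0) (Eventually.of_forall hg0) (h2 ▸ hf) (h2 ▸ hg)
  have e1 : ∀ h : Ω → ℝ, (∫ a, h a ^ (2:ℝ) ∂P) = ∫ a, h a ^ (2:ℕ) ∂P := fun h =>
    integral_congr_ae (Eventually.of_forall fun ω => by
      show h ω ^ (2:ℝ) = h ω ^ (2:ℕ)
      rw [← Real.rpow_natCast (h ω) 2]; norm_num)
  rw [e1 f, e1 g] at this
  refine this.trans_eq ?_
  rw [← Real.sqrt_eq_rpow, ← Real.sqrt_eq_rpow]

lemma memL2_frob {n m : ℕ} {F : Ω → Matrix (Fin n) (Fin m) ℝ}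
    (hFmeas : ∀ i j, Measurable fun ω => F ω i j)
    (hFInt : Integrable (fun ω => frobSq (F ω)) P) :
    MemLp (fun ω => frob (F ω)) 2 P := by
  refine (memLp_two_iff_integrable_sq
    (frob_measurable hFmeas).aestronglyMeasurable).2 ?_
  simpa only [frob_sq_eq] using hFInt

lemma integrable_matVec {n m : ℕ} {F : Ω → Matrix (Fin n) (Fin m) ℝ}
    {ξ : Ω → EuclideanSpace ℝ (Fin m)}
    (hFmeas : ∀ i j, Measurable fun ω => F ω i j)
    (hFInt : Integrable (fun ω => frobSq (F ω)) P) (hξ : MemLp ξ 2 P) :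
    Integrable (fun ω => matVec (F ω) (ξ ω)) P := by
  refine Integrable.mono' (integrable_mul_L2 (memL2_frob hFmeas hFInt) hξ.norm)
    (matVec_aesm hFmeas hξ.1) (Eventually.of_forall fun ω => norm_matVec_le _ _)

lemma integral_frob_norm_le {n m : ℕ} {F : Ω → Matrix (Fin n) (Fin m) ℝ}
    {ξ : Ω → EuclideanSpace ℝ (Fin m)}
    (hFmeas : ∀ i j, Measurable fun ω => F ω i j)
    (hFInt : Integrable (fun ω => frobSq (F ω)) P) (hξ : MemLp ξ 2 P) :
    ∫ ω, frob (F ω) * ‖ξ ω‖ ∂P ≤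
      Real.sqrt (∫ ω, frobSq (F ω) ∂P) * Real.sqrt (∫ ω, ‖ξ ω‖ ^ 2 ∂P) := by
  have := integral_mul_sqrt (fun ω => frob_nonneg (F ω)) (fun ω => norm_nonneg (ξ ω))
    (memL2_frob hFmeas hFInt) hξ.norm
  simpa only [frob_sq_eq] using this

lemma norm_integral_matVec_le {n m : ℕ} {F : Ω → Matrix (Fin n) (Fin m) ℝ}
    {ξ : Ω → EuclideanSpace ℝ (Fin m)}
    (hFmeas : ∀ i j, Measurable fun ω => F ω i j)
    (hFInt : Integrable (fun ω => frobSq (F ω)) P) (hξ : MemLp ξ 2 P) :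
    ‖∫ ω, matVec (F ω) (ξ ω) ∂P‖ ≤
      Real.sqrt (∫ ω, frobSq (F ω) ∂P) * Real.sqrt (∫ ω, ‖ξ ω‖ ^ 2 ∂P) := by
  refine (norm_integral_le_integral_norm _).trans ?_
  refine le_trans (integral_mono (integrable_matVec hFmeas hFInt hξ).norm
    (integrable_mul_L2 (memL2_frob hFmeas hFInt) hξ.norm)
    (fun ω => norm_matVec_le _ _)) ?_
  exact integral_frob_norm_le hFmeas hFInt hξ

end IntLemmas

section TsumLemmas
variable {Ω : Type*} [MeasurableSpace Ω] {P : Measure Ω}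

lemma aesm_tsum_of_ae_summable {ι : Type*} [Denumerable ι]
    {E : Type*} [NormedAddCommGroup E] [NormedSpace ℝ E]
    {f : ι → Ω → E} (hf : ∀ i, AEStronglyMeasurable (f i) P)
    (hsum : ∀ᵐ ω ∂P, Summable fun i => f i ω) :
    AEStronglyMeasurable (fun ω => ∑' i, f i ω) P := by
  classical
  set e : ℕ ≃ ι := (Denumerable.eqv ι).symm
  refine aestronglyMeasurable_of_tendsto_ae (u := atTop)
    (f := fun N ω => ∑ k ∈ Finset.range N, f (e k) ω) ?_ ?_
  · intro N
    exact Finset.aestronglyMeasurable_fun_sum _ fun k _ => hf (e k)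
  · filter_upwards [hsum] with ω hω
    have h1 : HasSum (fun i => f i ω) (∑' i, f i ω) := hω.hasSum
    have h2 : HasSum ((fun i => f i ω) ∘ e) (∑' i, f i ω) := e.hasSum_iff.mpr h1
    exact h2.tendsto_sum_nat

lemma ae_summable_of_summable_integral {ι : Type*} [Countable ι] {u : ι → Ω → ℝ}
    (h0 : ∀ i ω, 0 ≤ u i ω) (hint : ∀ i, Integrable (u i) P)
    (hsum : Summable fun i => ∫ ω, u i ω ∂P) :
    ∀ᵐ ω ∂P, Summable fun i => u i ω := by
  have hae : ∀ i, AEMeasurable (fun ω => ENNReal.ofReal (u i ω)) P := fun i =>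
    (hint i).aemeasurable.ennreal_ofReal
  have hlint : ∀ i, ∫⁻ ω, ENNReal.ofReal (u i ω) ∂P = ENNReal.ofReal (∫ ω, u i ω ∂P) := fun i =>
    (ofReal_integral_eq_lintegral_ofReal (hint i) (Eventually.of_forall (h0 i))).symm
  have key : ∫⁻ ω, ∑' i, ENNReal.ofReal (u i ω) ∂P ≠ ∞ := by
    rw [lintegral_tsum hae, funext hlint,
      ← ENNReal.ofReal_tsum_of_nonneg (fun i => integral_nonneg (h0 i)) hsum]
    exact ENNReal.ofReal_ne_top
  filter_upwards [ae_lt_top' (AEMeasurable.ennreal_tsum hae) key] with ω hω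
  have := ENNReal.summable_toReal hω.ne
  refine this.congr fun i => ?_
  exact ENNReal.toReal_ofReal (h0 i ω)

lemma integrable_tsum_nonneg {ι : Type*} [Denumerable ι] {u : ι → Ω → ℝ}
    (h0 : ∀ i ω, 0 ≤ u i ω) (hint : ∀ i, Integrable (u i) P)
    (hsum : Summable fun i => ∫ ω, u i ω ∂P) :
    Integrable (fun ω => ∑' i, u i ω) P := by
  have hae := ae_summable_of_summable_integral h0 hint hsum
  have haesm := aesm_tsum_of_ae_summable (fun i => (hint i).1) hae
  refine ⟨haesm, ?_⟩
  rw [hasFiniteIntegral_iff_norm]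
  have heq : ∀ᵐ ω ∂P, ENNReal.ofReal ‖∑' i, u i ω‖ = ∑' i, ENNReal.ofReal (u i ω) := by
    filter_upwards [hae] with ω hω
    rw [Real.norm_of_nonneg (tsum_nonneg fun i => h0 i ω),
      ENNReal.ofReal_tsum_of_nonneg (fun i => h0 i ω) hω]
  rw [lintegral_congr_ae heq, lintegral_tsum fun i => (hint i).aemeasurable.ennreal_ofReal]
  have hlint : ∀ i, ∫⁻ ω, ENNReal.ofReal (u i ω) ∂P = ENNReal.ofReal (∫ ω, u i ω ∂P) := fun i =>
    (ofReal_integral_eq_lintegral_ofReal (hint i) (Eventually.of_forall (h0 i))).symm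
  rw [funext hlint, ← ENNReal.ofReal_tsum_of_nonneg (fun i => integral_nonneg (h0 i)) hsum]
  exact ENNReal.ofReal_lt_top

lemma integrable_tsum' {ι : Type*} [Denumerable ι] {g : ι → Ω → ℝ}
    (hint : ∀ i, Integrable (g i) P)
    (hsum : Summable fun i => ∫ ω, |g i ω| ∂P) :
    Integrable (fun ω => ∑' i, g i ω) P := by
  have habs : ∀ i, Integrable (fun ω => |g i ω|) P := fun i => (hint i).abs
  have hae : ∀ᵐ ω ∂P, Summable fun i => |g i ω| :=
    ae_summable_of_summable_integral (fun i ω => abs_nonneg _) habs hsum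
  refine Integrable.mono' (integrable_tsum_nonneg (fun i ω => abs_nonneg _) habs hsum)
    (aesm_tsum_of_ae_summable (fun i => (hint i).1)
      (hae.mono fun ω hω => summable_abs_iff.mp hω)) ?_
  filter_upwards [hae] with ω hω
  have hn : Summable fun i => ‖g i ω‖ := by simpa [Real.norm_eq_abs] using hω
  have h1 : ‖∑' i, g i ω‖ ≤ ∑' i, ‖g i ω‖ := norm_tsum_le_tsum_norm hn
  simpa [Real.norm_eq_abs] using h1
end TsumLemmas

section Helper
variable {n : ℕ} {Ω : Type*} [MeasurableSpace Ω] {P : Measure Ω} [IsProbabilityMeasure P]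

lemma helperA {ι : Type*} [Denumerable ι] {F : ι → Ω → Matrix (Fin n) (Fin n) ℝ}
    (hFmeas : ∀ k i j, Measurable fun ω => F k ω i j)
    (hFInt : ∀ k, Integrable (fun ω => frobSq (F k ω)) P)
    (c : ι → EuclideanSpace ℝ (Fin n))
    (hc : Summable fun k => Real.sqrt (∫ ω, frobSq (F k ω) ∂P) * ‖c k‖)
    {η : Ω → EuclideanSpace ℝ (Fin n)} (hη : MemLp η 2 P) :
    Integrable (fun ω => ⟪∑' k, matVec (F k ω).transpose (c k), η ω⟫) P ∧
    ∫ ω, ⟪∑' k, matVec (F k ω).transpose (c k), η ω⟫ ∂P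
      = ∑' k, ⟪c k, ∫ ω, matVec (F k ω) (η ω) ∂P⟫ := by
  set Sη := Real.sqrt (∫ ω, ‖η ω‖ ^ 2 ∂P) with hSη
  set g : ι → Ω → ℝ := fun k ω => ⟪matVec (F k ω).transpose (c k), η ω⟫ with hg
  have hFt : ∀ k i j, Measurable fun ω => (F k ω).transpose i j := fun k i j => hFmeas k j i
  have hfk_aesm : ∀ k, AEStronglyMeasurable (fun ω => matVec (F k ω).transpose (c k)) P :=
    fun k => matVec_aesm (hFt k) aestronglyMeasurable_const
  have hg_aesm : ∀ k, AEStronglyMeasurable (g k) P := fun k =>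
    (hfk_aesm k).inner hη.1
  have hbound : ∀ k ω, |g k ω| ≤ frob (F k ω) * ‖η ω‖ * ‖c k‖ := by
    intro k ω
    calc |g k ω| ≤ ‖matVec (F k ω).transpose (c k)‖ * ‖η ω‖ := abs_real_inner_le_norm _ _
      _ ≤ (frob (F k ω).transpose * ‖c k‖) * ‖η ω‖ :=
          mul_le_mul_of_nonneg_right (norm_matVec_le _ _) (norm_nonneg _)
      _ = frob (F k ω) * ‖η ω‖ * ‖c k‖ := by rw [frob_transpose]; ring
  have hdom : ∀ k, Integrable (fun ω => frob (F k ω) * ‖η ω‖ * ‖c k‖) P := fun k =>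
    (integrable_mul_L2 (memL2_frob (hFmeas k) (hFInt k)) hη.norm).mul_const _
  have hg_int : ∀ k, Integrable (g k) P := fun k =>
    Integrable.mono' (hdom k) (hg_aesm k)
      (Eventually.of_forall fun ω => by rw [Real.norm_eq_abs]; exact hbound k ω)
  have hIg : ∀ k, ∫ ω, |g k ω| ∂P ≤ Real.sqrt (∫ ω, frobSq (F k ω) ∂P) * ‖c k‖ * Sη := by
    intro k
    calc ∫ ω, |g k ω| ∂P ≤ ∫ ω, frob (F k ω) * ‖η ω‖ * ‖c k‖ ∂P :=
          integral_mono (hg_int k).abs (hdom k) (hbound k)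
      _ = (∫ ω, frob (F k ω) * ‖η ω‖ ∂P) * ‖c k‖ := integral_mul_const _ _
      _ ≤ (Real.sqrt (∫ ω, frobSq (F k ω) ∂P) * Sη) * ‖c k‖ :=
          mul_le_mul_of_nonneg_right (integral_frob_norm_le (hFmeas k) (hFInt k) hη)
            (norm_nonneg _)
      _ = _ := by ring
  have hsumg : Summable fun k => ∫ ω, |g k ω| ∂P :=
    Summable.of_nonneg_of_le (fun k => integral_nonneg fun ω => abs_nonneg _)
      hIg (by simpa [mul_assoc] using hc.mul_right Sη)
  -- a.e. summability of the vector series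
  have hu_int : ∀ k, Integrable (fun ω => frob (F k ω) * ‖c k‖) P := fun k =>
    (((memL2_frob (hFmeas k) (hFInt k))).integrable one_le_two).mul_const _
  have hfrob_int_le : ∀ k, ∫ ω, frob (F k ω) ∂P ≤ Real.sqrt (∫ ω, frobSq (F k ω) ∂P) := by
    intro k
    have h1 := integral_mul_sqrt (f := fun ω => frob (F k ω)) (g := fun _ => (1:ℝ))
      (fun ω => frob_nonneg _) (fun _ => zero_le_one)
      (memL2_frob (hFmeas k) (hFInt k)) (memLp_const 1)
    simpa [frob_sq_eq, measure_univ] using h1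
  have hsum_u : Summable fun k => ∫ ω, frob (F k ω) * ‖c k‖ ∂P := by
    refine Summable.of_nonneg_of_le
      (fun k => integral_nonneg fun ω => mul_nonneg (frob_nonneg _) (norm_nonneg _))
      (fun k => ?_) hc
    rw [integral_mul_const]
    exact mul_le_mul_of_nonneg_right (hfrob_int_le k) (norm_nonneg _)
  have hae_sum_vec : ∀ᵐ ω ∂P, Summable fun k => matVec (F k ω).transpose (c k) := by
    filter_upwards [ae_summable_of_summable_integral
      (fun k ω => mul_nonneg (frob_nonneg _) (norm_nonneg _)) hu_int hsum_u] with ω hω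
    refine Summable.of_norm_bounded hω fun k => ?_
    calc ‖matVec (F k ω).transpose (c k)‖ ≤ frob (F k ω).transpose * ‖c k‖ := norm_matVec_le _ _
      _ = frob (F k ω) * ‖c k‖ := by rw [frob_transpose]
  have hae_eq : ∀ᵐ ω ∂P,
      ⟪∑' k, matVec (F k ω).transpose (c k), η ω⟫ = ∑' k, g k ω := by
    filter_upwards [hae_sum_vec] with ω hω
    rw [real_inner_comm]
    have h2 := (innerSL ℝ (η ω)).map_tsum hω
    refine h2.trans (tsum_congr fun k => ?_)
    show ⟪η ω, matVec (F k ω).transpose (c k)⟫ = _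
    rw [real_inner_comm]
  have hsumg' : Summable fun k => ∫ ω, ‖g k ω‖ ∂P := by
    simpa [Real.norm_eq_abs] using hsumg
  constructor
  · exact (integrable_tsum' hg_int hsumg).congr
      (hae_eq.mono fun ω h => h.symm)
  · rw [integral_congr_ae hae_eq, ← integral_tsum_of_summable_integral_norm hg_int hsumg']
    refine tsum_congr fun k => ?_
    have h1 : ∫ ω, g k ω ∂P = ∫ ω, ⟪c k, matVec (F k ω) (η ω)⟫ ∂P := by
      refine integral_congr_ae (Eventually.of_forall fun ω => ?_)
      rw [hg]
      simp only
      rw [matVec_inner, Matrix.transpose_transpose]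
    rw [h1, integral_inner (integrable_matVec (hFmeas k) (hFInt k) hη)]

end Helper

lemma sqrt_mul_sqrt_le {x y : ℝ} (hx : 0 ≤ x) (hy : 0 ≤ y) :
    Real.sqrt x * Real.sqrt y ≤ (x + y) / 2 := by
  nlinarith [Real.sq_sqrt hx, Real.sq_sqrt hy, sq_nonneg (Real.sqrt x - Real.sqrt y)]

section Expand
variable {n : ℕ} {Ω : Type*} [MeasurableSpace Ω] (P : Measure Ω) [IsProbabilityMeasure P]

lemma meanFieldG_integral_expand
    (G : Ω → Matrix (Fin n) (Fin n) ℝ)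
    (Gtil Gbar : ℕ → Ω → Matrix (Fin n) (Fin n) ℝ)
    (Ghat : ℕ → ℕ → Ω → Matrix (Fin n) (Fin n) ℝ)
    (hGmeas : ∀ i j, Measurable fun ω => G ω i j)
    (hGbdd : ∃ C : ℝ, ∀ᵐ ω ∂P, frob (G ω) ≤ C)
    (hGtilMeas : ∀ k i j, Measurable fun ω => Gtil k ω i j)
    (hGbarMeas : ∀ k i j, Measurable fun ω => Gbar k ω i j)
    (hGtilInt : ∀ k, Integrable (fun ω => frobSq (Gtil k ω)) P)
    (hGbarInt : ∀ k, Integrable (fun ω => frobSq (Gbar k ω)) P)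
    (hGtilSum : Summable fun k => ∫ ω, frobSq (Gtil k ω) ∂P)
    (hGbarSum : Summable fun k => ∫ ω, frobSq (Gbar k ω) ∂P)
    (hGhatSum : Summable fun p : ℕ × ℕ => frobSq (matExp P (Ghat p.1 p.2)))
    (ξ η : Ω → EuclideanSpace ℝ (Fin n)) (hξ : MemLp ξ 2 P) (hη : MemLp η 2 P) :
    ∫ ω, ⟪meanFieldG P G Gtil Gbar Ghat ξ ω, η ω⟫ ∂P =
      ∫ ω, ⟪matVec (G ω) (ξ ω), η ω⟫ ∂P
      + (∑' k, ⟪(∫ ω', matVec (Gbar k ω') (ξ ω') ∂P), ∫ ω', matVec (Gtil k ω') (η ω') ∂P⟫)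
      + (∑' k, ⟪(∫ ω', matVec (Gtil k ω') (ξ ω') ∂P), ∫ ω', matVec (Gbar k ω') (η ω') ∂P⟫)
      + ∑' p : ℕ × ℕ, ⟪matVec (matExp P (Ghat p.1 p.2)) (∫ ω', matVec (Gtil p.2 ω') (ξ ω') ∂P),
          ∫ ω', matVec (Gtil p.1 ω') (η ω') ∂P⟫ := by
  have hSξ0 : 0 ≤ Real.sqrt (∫ ω, ‖ξ ω‖ ^ 2 ∂P) := Real.sqrt_nonneg _
  -- norms of the constant vectors
  have hbound_b : ∀ k, ‖∫ ω', matVec (Gtil k ω') (ξ ω') ∂P‖ ≤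
      Real.sqrt (∫ ω, frobSq (Gtil k ω) ∂P) * Real.sqrt (∫ ω, ‖ξ ω‖ ^ 2 ∂P) := fun k =>
    norm_integral_matVec_le (hGtilMeas k) (hGtilInt k) hξ
  have hbound_a : ∀ k, ‖∫ ω', matVec (Gbar k ω') (ξ ω') ∂P‖ ≤
      Real.sqrt (∫ ω, frobSq (Gbar k ω) ∂P) * Real.sqrt (∫ ω, ‖ξ ω‖ ^ 2 ∂P) := fun k =>
    norm_integral_matVec_le (hGbarMeas k) (hGbarInt k) hξ
  have htk0 : ∀ k, 0 ≤ ∫ ω, frobSq (Gtil k ω) ∂P := fun k =>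
    integral_nonneg fun ω => frobSq_nonneg _
  have hsk0 : ∀ k, 0 ≤ ∫ ω, frobSq (Gbar k ω) ∂P := fun k =>
    integral_nonneg fun ω => frobSq_nonneg _
  -- summability hypotheses for helperA
  have hcB : Summable fun k => Real.sqrt (∫ ω, frobSq (Gtil k ω) ∂P) *
      ‖∫ ω', matVec (Gbar k ω') (ξ ω') ∂P‖ := by
    refine Summable.of_nonneg_of_le
      (fun k => mul_nonneg (Real.sqrt_nonneg _) (norm_nonneg _)) (fun k => ?_)
      ((((hGtilSum.add hGbarSum).div_const 2)).mul_right (Real.sqrt (∫ ω, ‖ξ ω‖ ^ 2 ∂P)))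
    calc Real.sqrt (∫ ω, frobSq (Gtil k ω) ∂P) * ‖∫ ω', matVec (Gbar k ω') (ξ ω') ∂P‖
        ≤ Real.sqrt (∫ ω, frobSq (Gtil k ω) ∂P) *
          (Real.sqrt (∫ ω, frobSq (Gbar k ω) ∂P) * Real.sqrt (∫ ω, ‖ξ ω‖ ^ 2 ∂P)) :=
          mul_le_mul_of_nonneg_left (hbound_a k) (Real.sqrt_nonneg _)
      _ = (Real.sqrt (∫ ω, frobSq (Gtil k ω) ∂P) * Real.sqrt (∫ ω, frobSq (Gbar k ω) ∂P)) *
            Real.sqrt (∫ ω, ‖ξ ω‖ ^ 2 ∂P) := by ring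
      _ ≤ ((∫ ω, frobSq (Gtil k ω) ∂P) + ∫ ω, frobSq (Gbar k ω) ∂P) / 2 *
            Real.sqrt (∫ ω, ‖ξ ω‖ ^ 2 ∂P) :=
          mul_le_mul_of_nonneg_right (sqrt_mul_sqrt_le (htk0 k) (hsk0 k)) hSξ0
  have hcC : Summable fun k => Real.sqrt (∫ ω, frobSq (Gbar k ω) ∂P) *
      ‖∫ ω', matVec (Gtil k ω') (ξ ω') ∂P‖ := by
    refine Summable.of_nonneg_of_le
      (fun k => mul_nonneg (Real.sqrt_nonneg _) (norm_nonneg _)) (fun k => ?_)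
      ((((hGbarSum.add hGtilSum).div_const 2)).mul_right (Real.sqrt (∫ ω, ‖ξ ω‖ ^ 2 ∂P)))
    calc Real.sqrt (∫ ω, frobSq (Gbar k ω) ∂P) * ‖∫ ω', matVec (Gtil k ω') (ξ ω') ∂P‖
        ≤ Real.sqrt (∫ ω, frobSq (Gbar k ω) ∂P) *
          (Real.sqrt (∫ ω, frobSq (Gtil k ω) ∂P) * Real.sqrt (∫ ω, ‖ξ ω‖ ^ 2 ∂P)) :=
          mul_le_mul_of_nonneg_left (hbound_b k) (Real.sqrt_nonneg _)
      _ = (Real.sqrt (∫ ω, frobSq (Gbar k ω) ∂P) * Real.sqrt (∫ ω, frobSq (Gtil k ω) ∂P)) *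
            Real.sqrt (∫ ω, ‖ξ ω‖ ^ 2 ∂P) := by ring
      _ ≤ _ :=
          mul_le_mul_of_nonneg_right (sqrt_mul_sqrt_le (hsk0 k) (htk0 k)) hSξ0
  have hcD : Summable fun p : ℕ × ℕ => Real.sqrt (∫ ω, frobSq (Gtil p.1 ω) ∂P) *
      ‖matVec (matExp P (Ghat p.1 p.2)) (∫ ω', matVec (Gtil p.2 ω') (ξ ω') ∂P)‖ := by
    have hprod : Summable fun p : ℕ × ℕ =>
        (∫ ω, frobSq (Gtil p.1 ω) ∂P) * ∫ ω, frobSq (Gtil p.2 ω) ∂P :=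
      hGtilSum.mul_of_nonneg hGtilSum htk0 htk0
    refine Summable.of_nonneg_of_le
      (fun p => mul_nonneg (Real.sqrt_nonneg _) (norm_nonneg _)) (fun p => ?_)
      (((hprod.add hGhatSum).div_const 2).mul_right (Real.sqrt (∫ ω, ‖ξ ω‖ ^ 2 ∂P)))
    have h1 : ‖matVec (matExp P (Ghat p.1 p.2)) (∫ ω', matVec (Gtil p.2 ω') (ξ ω') ∂P)‖ ≤
        frob (matExp P (Ghat p.1 p.2)) *
          (Real.sqrt (∫ ω, frobSq (Gtil p.2 ω) ∂P) * Real.sqrt (∫ ω, ‖ξ ω‖ ^ 2 ∂P)) :=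
      (norm_matVec_le _ _).trans
        (mul_le_mul_of_nonneg_left (hbound_b p.2) (frob_nonneg _))
    calc Real.sqrt (∫ ω, frobSq (Gtil p.1 ω) ∂P) *
          ‖matVec (matExp P (Ghat p.1 p.2)) (∫ ω', matVec (Gtil p.2 ω') (ξ ω') ∂P)‖
        ≤ Real.sqrt (∫ ω, frobSq (Gtil p.1 ω) ∂P) *
            (frob (matExp P (Ghat p.1 p.2)) *
              (Real.sqrt (∫ ω, frobSq (Gtil p.2 ω) ∂P) * Real.sqrt (∫ ω, ‖ξ ω‖ ^ 2 ∂P))) :=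
          mul_le_mul_of_nonneg_left h1 (Real.sqrt_nonneg _)
      _ = (Real.sqrt ((∫ ω, frobSq (Gtil p.1 ω) ∂P) * ∫ ω, frobSq (Gtil p.2 ω) ∂P) *
            Real.sqrt (frobSq (matExp P (Ghat p.1 p.2)))) * Real.sqrt (∫ ω, ‖ξ ω‖ ^ 2 ∂P) := by
          rw [Real.sqrt_mul (htk0 p.1)]
          unfold frob
          ring
      _ ≤ (((∫ ω, frobSq (Gtil p.1 ω) ∂P) * (∫ ω, frobSq (Gtil p.2 ω) ∂P) +
            frobSq (matExp P (Ghat p.1 p.2))) / 2) * Real.sqrt (∫ ω, ‖ξ ω‖ ^ 2 ∂P) :=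
          mul_le_mul_of_nonneg_right
            (sqrt_mul_sqrt_le (mul_nonneg (htk0 p.1) (htk0 p.2)) (frobSq_nonneg _)) hSξ0
  -- apply helperA
  have hB := helperA (P := P) hGtilMeas hGtilInt _ hcB hη
  have hC := helperA (P := P) hGbarMeas hGbarInt _ hcC hη
  have hD' := helperA (P := P) (F := fun p : ℕ × ℕ => Gtil p.1) (fun p => hGtilMeas p.1)
    (fun p => hGtilInt p.1) _ hcD hη
  have hD : Integrable (fun ω => ⟪∑' p : ℕ × ℕ, matVec (Gtil p.1 ω).transpose
        (matVec (matExp P (Ghat p.1 p.2)) (∫ ω', matVec (Gtil p.2 ω') (ξ ω') ∂P)), η ω⟫) P ∧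
      ∫ ω, ⟪∑' p : ℕ × ℕ, matVec (Gtil p.1 ω).transpose
        (matVec (matExp P (Ghat p.1 p.2)) (∫ ω', matVec (Gtil p.2 ω') (ξ ω') ∂P)), η ω⟫ ∂P
      = ∑' p : ℕ × ℕ, ⟪matVec (matExp P (Ghat p.1 p.2)) (∫ ω', matVec (Gtil p.2 ω') (ξ ω') ∂P),
          ∫ ω, matVec (Gtil p.1 ω) (η ω) ∂P⟫ := hD'
  -- integrability of the G-term
  obtain ⟨C0, hC0⟩ := hGbdd
  have hAint : Integrable (fun ω => ⟪matVec (G ω) (ξ ω), η ω⟫) P := by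
    refine Integrable.mono'
      (((integrable_mul_L2 hξ.norm hη.norm)).const_mul (max C0 0))
      ((matVec_aesm hGmeas hξ.1).inner hη.1) ?_
    filter_upwards [hC0] with ω hω
    rw [Real.norm_eq_abs]
    calc |⟪matVec (G ω) (ξ ω), η ω⟫| ≤ ‖matVec (G ω) (ξ ω)‖ * ‖η ω‖ :=
          abs_real_inner_le_norm _ _
      _ ≤ (frob (G ω) * ‖ξ ω‖) * ‖η ω‖ :=
          mul_le_mul_of_nonneg_right (norm_matVec_le _ _) (norm_nonneg _)
      _ ≤ (max C0 0 * ‖ξ ω‖) * ‖η ω‖ := by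
          have : frob (G ω) ≤ max C0 0 := hω.trans (le_max_left _ _)
          exact mul_le_mul_of_nonneg_right
            (mul_le_mul_of_nonneg_right this (norm_nonneg _)) (norm_nonneg _)
      _ = max C0 0 * (‖ξ ω‖ * ‖η ω‖) := by ring
  -- expand the integrand
  have hsplit : (fun ω => ⟪meanFieldG P G Gtil Gbar Ghat ξ ω, η ω⟫) =
      fun ω => ⟪matVec (G ω) (ξ ω), η ω⟫
        + ⟪∑' k, matVec (Gtil k ω).transpose (∫ ω', matVec (Gbar k ω') (ξ ω') ∂P), η ω⟫
        + ⟪∑' k, matVec (Gbar k ω).transpose (∫ ω', matVec (Gtil k ω') (ξ ω') ∂P), η ω⟫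
        + ⟪∑' p : ℕ × ℕ, matVec (Gtil p.1 ω).transpose
            (matVec (matExp P (Ghat p.1 p.2)) (∫ ω', matVec (Gtil p.2 ω') (ξ ω') ∂P)), η ω⟫ := by
    funext ω
    simp only [meanFieldG, inner_add_left]
  have h12 : Integrable (fun ω => ⟪matVec (G ω) (ξ ω), η ω⟫
      + ⟪∑' k, matVec (Gtil k ω).transpose (∫ ω', matVec (Gbar k ω') (ξ ω') ∂P), η ω⟫) P :=
    hAint.add hB.1
  have h123 : Integrable (fun ω => ⟪matVec (G ω) (ξ ω), η ω⟫
      + ⟪∑' k, matVec (Gtil k ω).transpose (∫ ω', matVec (Gbar k ω') (ξ ω') ∂P), η ω⟫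
      + ⟪∑' k, matVec (Gbar k ω).transpose (∫ ω', matVec (Gtil k ω') (ξ ω') ∂P), η ω⟫) P :=
    h12.add hC.1
  rw [hsplit, integral_add h123 hD.1, integral_add h12 hC.1, integral_add hAint hB.1,
    hB.2, hC.2, hD.2]

end Expand

end Aux

/-- If `G` is a.e. symmetric and `E[Ĝᵢⱼ]ᵀ = E[Ĝⱼᵢ]` for all `i, j`, then the
mean-field operator `𝒢` is self-adjoint on `L²(Ω; ℝⁿ)`:
`E[⟨𝒢ξ, η⟩] = E[⟨ξ, 𝒢η⟩]` for all `ξ, η ∈ L²(Ω; ℝⁿ)`. -/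
theorem meanField_terminal_operator_selfAdjoint
    (n : ℕ) {Ω : Type*} [MeasurableSpace Ω] (P : Measure Ω) [IsProbabilityMeasure P]
    (G : Ω → Matrix (Fin n) (Fin n) ℝ)
    (Gtil Gbar : ℕ → Ω → Matrix (Fin n) (Fin n) ℝ)
    (Ghat : ℕ → ℕ → Ω → Matrix (Fin n) (Fin n) ℝ)
    (hGmeas : ∀ i j, Measurable fun ω => G ω i j)
    (hGbdd : ∃ C : ℝ, ∀ᵐ ω ∂P, frob (G ω) ≤ C)
    (hGtilMeas : ∀ k i j, Measurable fun ω => Gtil k ω i j)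
    (hGbarMeas : ∀ k i j, Measurable fun ω => Gbar k ω i j)
    (hGtilInt : ∀ k, Integrable (fun ω => frobSq (Gtil k ω)) P)
    (hGbarInt : ∀ k, Integrable (fun ω => frobSq (Gbar k ω)) P)
    (hGtilSum : Summable fun k => ∫ ω, frobSq (Gtil k ω) ∂P)
    (hGbarSum : Summable fun k => ∫ ω, frobSq (Gbar k ω) ∂P)
    (hGhatInt : ∀ i j a b, Integrable (fun ω => Ghat i j ω a b) P)
    (hGhatSum : Summable fun p : ℕ × ℕ => frobSq (matExp P (Ghat p.1 p.2)))
    (hGsymm : ∀ᵐ ω ∂P, (G ω).transpose = G ω)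
    (hGhatSymm : ∀ i j, (matExp P (Ghat i j)).transpose = matExp P (Ghat j i)) :
    ∀ ξ η : Ω → EuclideanSpace ℝ (Fin n), MemLp ξ 2 P → MemLp η 2 P →
      ∫ ω, ⟪meanFieldG P G Gtil Gbar Ghat ξ ω, η ω⟫ ∂P =
        ∫ ω, ⟪ξ ω, meanFieldG P G Gtil Gbar Ghat η ω⟫ ∂P := by
  intro ξ η hξ hη
  have hflip : ∫ ω, ⟪ξ ω, meanFieldG P G Gtil Gbar Ghat η ω⟫ ∂P
      = ∫ ω, ⟪meanFieldG P G Gtil Gbar Ghat η ω, ξ ω⟫ ∂P :=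
    integral_congr_ae (Eventually.of_forall fun ω => real_inner_comm _ _)
  rw [hflip,
    meanFieldG_integral_expand P G Gtil Gbar Ghat hGmeas hGbdd hGtilMeas hGbarMeas hGtilInt
      hGbarInt hGtilSum hGbarSum hGhatSum ξ η hξ hη,
    meanFieldG_integral_expand P G Gtil Gbar Ghat hGmeas hGbdd hGtilMeas hGbarMeas hGtilInt
      hGbarInt hGtilSum hGbarSum hGhatSum η ξ hη hξ]
  have e1 : ∫ ω, ⟪matVec (G ω) (ξ ω), η ω⟫ ∂P = ∫ ω, ⟪matVec (G ω) (η ω), ξ ω⟫ ∂P := by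
    refine integral_congr_ae ?_
    filter_upwards [hGsymm] with ω h
    calc ⟪matVec (G ω) (ξ ω), η ω⟫ = ⟪ξ ω, matVec (G ω).transpose (η ω)⟫ := matVec_inner _ _ _
      _ = ⟪ξ ω, matVec (G ω) (η ω)⟫ := by rw [h]
      _ = ⟪matVec (G ω) (η ω), ξ ω⟫ := real_inner_comm _ _
  have e2 : (∑' k, ⟪(∫ ω', matVec (Gbar k ω') (ξ ω') ∂P), ∫ ω', matVec (Gtil k ω') (η ω') ∂P⟫)
      = ∑' k, ⟪(∫ ω', matVec (Gtil k ω') (η ω') ∂P), ∫ ω', matVec (Gbar k ω') (ξ ω') ∂P⟫ :=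
    tsum_congr fun k => real_inner_comm _ _
  have e3 : (∑' k, ⟪(∫ ω', matVec (Gtil k ω') (ξ ω') ∂P), ∫ ω', matVec (Gbar k ω') (η ω') ∂P⟫)
      = ∑' k, ⟪(∫ ω', matVec (Gbar k ω') (η ω') ∂P), ∫ ω', matVec (Gtil k ω') (ξ ω') ∂P⟫ :=
    tsum_congr fun k => real_inner_comm _ _
  have e4 : (∑' p : ℕ × ℕ,
        ⟪matVec (matExp P (Ghat p.1 p.2)) (∫ ω', matVec (Gtil p.2 ω') (ξ ω') ∂P),
          ∫ ω', matVec (Gtil p.1 ω') (η ω') ∂P⟫)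
      = ∑' p : ℕ × ℕ,
        ⟪matVec (matExp P (Ghat p.1 p.2)) (∫ ω', matVec (Gtil p.2 ω') (η ω') ∂P),
          ∫ ω', matVec (Gtil p.1 ω') (ξ ω') ∂P⟫ := by
    have hre := Equiv.tsum_eq (Equiv.prodComm ℕ ℕ) (fun p : ℕ × ℕ =>
      ⟪matVec (matExp P (Ghat p.1 p.2)) (∫ ω', matVec (Gtil p.2 ω') (ξ ω') ∂P),
        ∫ ω', matVec (Gtil p.1 ω') (η ω') ∂P⟫)
    rw [← hre]
    refine tsum_congr fun p => ?_
    calc ⟪matVec (matExp P (Ghat p.2 p.1)) (∫ ω', matVec (Gtil p.1 ω') (ξ ω') ∂P),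
          ∫ ω', matVec (Gtil p.2 ω') (η ω') ∂P⟫
        = ⟪matVec (matExp P (Ghat p.1 p.2)).transpose (∫ ω', matVec (Gtil p.1 ω') (ξ ω') ∂P),
            ∫ ω', matVec (Gtil p.2 ω') (η ω') ∂P⟫ := by rw [hGhatSymm]
      _ = ⟪∫ ω', matVec (Gtil p.1 ω') (ξ ω') ∂P,
            matVec (matExp P (Ghat p.1 p.2)) (∫ ω', matVec (Gtil p.2 ω') (η ω') ∂P)⟫ := by
          rw [matVec_inner, Matrix.transpose_transpose]
      _ = _ := real_inner_comm _ _
  rw [e1, e2, e3, e4]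
  ring
end

section
/- Let (Ω, 𝓕, P) be a probability space, R : Ω → ℝᵐˣᵐ measurable and essentially bounded, (R̃ₖ)ₖ∈ℕ and (R̄ₖ)ₖ∈ℕ sequences of measurable ℝᵐˣᵐ-valued random variables with ∑ₖ E|R̃ₖ|² < ∞ and ∑ₖ E|R̄ₖ|² < ∞, and (R̂ᵢⱼ)ᵢ,ⱼ∈ℕ integrable ℝᵐˣᵐ-valued random variables with ∑ᵢ,ⱼ |E[R̂ᵢⱼ]|² < ∞. Define the bounded operator ℛ on L²(Ω; ℝᵐ) by ℛη = Rη + ∑ₖ R̃ₖᵀ E[R̄ₖ η] + ∑ₖ R̄ₖᵀ E[R̃ₖ η] + ∑ᵢ,ⱼ R̃ᵢᵀ E[R̂ᵢⱼ] E[R̃ⱼ η]. Let δ > 0 and assume that for P-a.e. ω ∈ Ω: for every c ∈ ℝᵐ and every finitely supported sequence (dₖ)ₖ∈ℕ in ℝᵐ, ⟨R(ω)c, c⟩ + 2∑ₖ ⟨R̄ₖ(ω)c, dₖ⟩ + ∑ᵢ,ⱼ ⟨R̂ᵢⱼ(ω)dⱼ, dᵢ⟩ ≥ δ|c|². Then E[⟨ℛη,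 η⟩] ≥ δ E[|η|²] for every η ∈ L²(Ω; ℝᵐ). -/
open MeasureTheory Filter
open scoped RealInnerProductSpace

/-- Pointwise action of the mean-field operator
`ℛη = Rη + ∑ₖ R̃ₖᵀ E[R̄ₖ η] + ∑ₖ R̄ₖᵀ E[R̃ₖ η] + ∑ᵢⱼ R̃ᵢᵀ E[R̂ᵢⱼ] E[R̃ⱼ η]`. -/
noncomputable def meanFieldR {m : ℕ} {Ω : Type*} [MeasurableSpace Ω]
    (P : MeasureTheory.Measure Ω)
    (R : Ω → Matrix (Fin m) (Fin m) ℝ) (Rtil Rbar : ℕ → Ω → Matrix (Fin m) (Fin m) ℝ)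
    (Rhat : ℕ → ℕ → Ω → Matrix (Fin m) (Fin m) ℝ)
    (η : Ω → EuclideanSpace ℝ (Fin m)) (ω : Ω) : EuclideanSpace ℝ (Fin m) :=
  matVec (R ω) (η ω) +
    (∑' k, matVec (Rtil k ω).transpose (∫ ω', matVec (Rbar k ω') (η ω') ∂P)) +
    (∑' k, matVec (Rbar k ω).transpose (∫ ω', matVec (Rtil k ω') (η ω') ∂P)) +
    ∑' p : ℕ × ℕ, matVec (Rtil p.1 ω).transpose
      (matVec (matExp P (Rhat p.1 p.2)) (∫ ω', matVec (Rtil p.2 ω') (η ω') ∂P))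
section AuxHelpers
open MeasureTheory Filter
open scoped ENNReal NNReal RealInnerProductSpace

namespace MFAux

variable {n' m' : ℕ}

lemma matVec_apply (M : Matrix (Fin n') (Fin m') ℝ) (v : EuclideanSpace ℝ (Fin m'))
    (i : Fin n') : matVec M v i = ∑ j, M i j * v j := rfl

lemma matVec_zero (M : Matrix (Fin n') (Fin m') ℝ) :
    matVec M (0 : EuclideanSpace ℝ (Fin m')) = 0 := by
  ext i
  simp [matVec_apply]

lemma frobSq_nonneg (M : Matrix (Fin n') (Fin m') ℝ) : 0 ≤ frobSq M :=
  Finset.sum_nonneg fun _ _ => Finset.sum_nonneg fun _ _ => sq_nonneg _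

lemma frob_nonneg (M : Matrix (Fin n') (Fin m') ℝ) : 0 ≤ frob M := Real.sqrt_nonneg _

lemma frob_sq (M : Matrix (Fin n') (Fin m') ℝ) : frob M ^ 2 = frobSq M :=
  Real.sq_sqrt (frobSq_nonneg M)

lemma frobSq_transpose (M : Matrix (Fin n') (Fin m') ℝ) : frobSq M.transpose = frobSq M := by
  simp only [frobSq, Matrix.transpose_apply]
  exact Finset.sum_comm

lemma frob_transpose (M : Matrix (Fin n') (Fin m') ℝ) : frob M.transpose = frob M := by
  simp [frob, frobSq_transpose]

lemma eucl_norm_sq (v : EuclideanSpace ℝ (Fin m')) : ‖v‖ ^ 2 = ∑ i, v i ^ 2 := by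
  rw [EuclideanSpace.norm_eq, Real.sq_sqrt (Finset.sum_nonneg fun _ _ => sq_nonneg _)]
  simp [Real.norm_eq_abs, sq_abs]

lemma inner_matVec (M : Matrix (Fin n') (Fin m') ℝ) (v : EuclideanSpace ℝ (Fin m'))
    (w : EuclideanSpace ℝ (Fin n')) :
    ⟪matVec M v, w⟫ = ∑ i, (∑ j, M i j * v j) * w i := by
  simp [PiLp.inner_apply, RCLike.inner_apply, matVec_apply]
  exact Finset.sum_congr rfl fun _ _ => mul_comm _ _

lemma inner_matVec_transpose (M : Matrix (Fin n') (Fin m') ℝ) (a : EuclideanSpace ℝ (Fin n'))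
    (w : EuclideanSpace ℝ (Fin m')) :
    ⟪matVec M.transpose a, w⟫ = ⟪a, matVec M w⟫ := by
  simp only [inner_matVec, PiLp.inner_apply, RCLike.inner_apply, RingHom.id_apply, matVec_apply,
    starRingEnd_apply, star_trivial, Matrix.transpose_apply, Finset.sum_mul, Finset.mul_sum]
  rw [Finset.sum_comm]
  apply Finset.sum_congr rfl; intros; apply Finset.sum_congr rfl; intros; ring

lemma norm_matVec_le (M : Matrix (Fin n') (Fin m') ℝ) (v : EuclideanSpace ℝ (Fin m')) :
    ‖matVec M v‖ ≤ frob M * ‖v‖ := by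
  have h2 : ‖matVec M v‖ ^ 2 ≤ (frob M * ‖v‖) ^ 2 := by
    rw [mul_pow, frob_sq, eucl_norm_sq, eucl_norm_sq]
    calc ∑ i, (matVec M v i) ^ 2 = ∑ i, (∑ j, M i j * v j) ^ 2 := by
          simp [matVec_apply]
      _ ≤ ∑ i, (∑ j, (M i j) ^ 2) * (∑ j, (v j) ^ 2) := by
          apply Finset.sum_le_sum
          intro i _
          exact Finset.sum_mul_sq_le_sq_mul_sq _ _ _
      _ = frobSq M * ∑ j, (v j) ^ 2 := by rw [← Finset.sum_mul]; rfl
  have hnn : 0 ≤ frob M * ‖v‖ := mul_nonneg (frob_nonneg M) (norm_nonneg v)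
  nlinarith [norm_nonneg (matVec M v)]

lemma abs_inner_matVec_le (M : Matrix (Fin n') (Fin m') ℝ) (v : EuclideanSpace ℝ (Fin m'))
    (w : EuclideanSpace ℝ (Fin n')) :
    |⟪matVec M v, w⟫| ≤ frob M * ‖v‖ * ‖w‖ :=
  (abs_real_inner_le_norm _ _).trans
    (mul_le_mul_of_nonneg_right (norm_matVec_le M v) (norm_nonneg w))

variable {α : Type*} [MeasurableSpace α] {μ : Measure α}

/-- Cauchy–Schwarz for integrals of nonnegative functions. -/
lemma integral_mul_le_sqrt_mul_sqrt (f g : α → ℝ) (hf : ∀ x, 0 ≤ f x) (hg : ∀ x, 0 ≤ g x)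
    (hfm : AEStronglyMeasurable f μ) (hgm : AEStronglyMeasurable g μ)
    (hf2 : Integrable (fun x => f x ^ 2) μ) (hg2 : Integrable (fun x => g x ^ 2) μ) :
    ∫ x, f x * g x ∂μ ≤ Real.sqrt (∫ x, f x ^ 2 ∂μ) * Real.sqrt (∫ x, g x ^ 2 ∂μ) := by
  have hmul : Integrable (fun x => f x * g x) μ := by
    refine Integrable.mono' ((hf2.add hg2).div_const 2) (hfm.mul hgm) ?_
    filter_upwards with x
    simp only [Pi.add_apply]
    rw [Real.norm_eq_abs, abs_of_nonneg (mul_nonneg (hf x) (hg x))]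
    nlinarith [sq_nonneg (f x - g x)]
  set A := ∫ x, f x ^ 2 ∂μ with hA
  set B := ∫ x, g x ^ 2 ∂μ with hB
  set C := ∫ x, f x * g x ∂μ with hC
  have hAnn : 0 ≤ A := integral_nonneg fun x => sq_nonneg _
  have hBnn : 0 ≤ B := integral_nonneg fun x => sq_nonneg _
  have hCnn : 0 ≤ C := integral_nonneg fun x => mul_nonneg (hf x) (hg x)
  rcases eq_or_lt_of_le hBnn with hB0 | hBpos
  · have hg0 : (fun x => g x ^ 2) =ᵐ[μ] 0 := by
      rw [← integral_eq_zero_iff_of_nonneg (fun x => sq_nonneg (g x)) hg2]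
      exact hB0.symm
    have : (fun x => f x * g x) =ᵐ[μ] 0 := by
      filter_upwards [hg0] with x hx
      have hgx : g x = 0 := by
        simp only [Pi.zero_apply] at hx
        nlinarith [hg x]
      simp [hgx]
    have : C = 0 := integral_eq_zero_of_ae this
    rw [this]
    positivity
  · have key : 0 ≤ ∫ x, (f x - (C / B) * g x) ^ 2 ∂μ := integral_nonneg fun x => sq_nonneg _
    have hexp : ∫ x, (f x - (C / B) * g x) ^ 2 ∂μ = A - 2 * (C / B) * C + (C / B) ^ 2 * B := by
      have h1 : ∀ x, (f x - (C / B) * g x) ^ 2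
          = f x ^ 2 - (2 * (C / B)) * (f x * g x) + (C / B) ^ 2 * g x ^ 2 := by
        intro x; ring
      simp_rw [h1]
      rw [integral_add (by exact (hf2.sub (hmul.const_mul _))) (hg2.const_mul _),
        integral_sub hf2 (hmul.const_mul _), integral_const_mul, integral_const_mul]
    have hCsq : C ^ 2 ≤ A * B := by
      rw [hexp] at key
      have h3 : A - 2 * (C / B) * C + (C / B) ^ 2 * B = A - C ^ 2 / B := by
        field_simp
        ring
      rw [h3, sub_nonneg] at key
      exact (div_le_iff₀ hBpos).mp key
    calc C = Real.sqrt (C ^ 2) := (Real.sqrt_sq hCnn).symm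
      _ ≤ Real.sqrt (A * B) := Real.sqrt_le_sqrt hCsq
      _ = Real.sqrt A * Real.sqrt B := Real.sqrt_mul hAnn _

lemma key_lintegral {E : Type*} [NormedAddCommGroup E] {F : ℕ → α → E}
    (hF_int : ∀ i, Integrable (F i) μ)
    (hF_sum : Summable fun i => ∫ a, ‖F i a‖ ∂μ) :
    ∑' i, ∫⁻ a, (‖F i a‖₊ : ℝ≥0∞) ∂μ ≠ ∞ := by
  have h1 : ∀ i, ∫⁻ a, (‖F i a‖₊ : ℝ≥0∞) ∂μ = ENNReal.ofReal (∫ a, ‖F i a‖ ∂μ) := fun i =>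
    (ofReal_integral_norm_eq_lintegral_enorm (hF_int i)).symm
  simp_rw [h1]
  rw [← ENNReal.ofReal_tsum_of_nonneg (fun i => integral_nonneg fun a => norm_nonneg _) hF_sum]
  exact ENNReal.ofReal_ne_top

/-- a.e. summability (of norms) from summability of integrals of norms. -/
lemma ae_summable_norm {E : Type*} [NormedAddCommGroup E]
    {F : ℕ → α → E} (hF_int : ∀ i, Integrable (F i) μ)
    (hF_sum : Summable fun i => ∫ a, ‖F i a‖ ∂μ) :
    ∀ᵐ a ∂μ, Summable fun i => ‖F i a‖ := by
  have hf'' : ∀ i, AEMeasurable (fun x => (‖F i x‖₊ : ℝ≥0∞)) μ := fun i =>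
    (hF_int i).aestronglyMeasurable.enorm
  have key := key_lintegral hF_int hF_sum
  rw [← lintegral_tsum hf''] at key
  refine (ae_lt_top' (AEMeasurable.ennreal_tsum hf'') key).mono fun x hx => ?_
  have : Summable fun i => (‖F i x‖₊ : ℝ) := by
    rw [← ENNReal.tsum_coe_ne_top_iff_summable_coe]
    exact hx.ne
  simpa [coe_nnnorm] using this

lemma integrable_tsum' {E : Type*} [NormedAddCommGroup E] [CompleteSpace E] {F : ℕ → α → E}
    (hF_int : ∀ i, Integrable (F i) μ)
    (hF_sum : Summable fun i => ∫ a, ‖F i a‖ ∂μ) :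
    Integrable (fun a => ∑' i, F i a) μ := by
  have hae := ae_summable_norm hF_int hF_sum
  constructor
  · refine aestronglyMeasurable_of_tendsto_ae atTop
      (fun n => Finset.aestronglyMeasurable_sum (Finset.range n)
        fun i _ => (hF_int i).aestronglyMeasurable) ?_
    filter_upwards [hae] with a ha
    exact (ha.of_norm.hasSum.tendsto_sum_nat).congr fun n => (Finset.sum_apply a _ _).symm
  · rw [hasFiniteIntegral_def]
    calc ∫⁻ a, (‖∑' i, F i a‖₊ : ℝ≥0∞) ∂μ
        ≤ ∫⁻ a, ∑' i, (‖F i a‖₊ : ℝ≥0∞) ∂μ := by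
          apply lintegral_mono_ae
          filter_upwards [hae] with a ha
          have hs : Summable fun i => ‖F i a‖₊ := by
            rw [← NNReal.summable_coe]
            simpa [coe_nnnorm] using ha
          have h1 : (‖∑' i, F i a‖₊ : ℝ≥0∞) ≤ (((∑' i, ‖F i a‖₊) : ℝ≥0) : ℝ≥0∞) :=
            ENNReal.coe_le_coe.2 (nnnorm_tsum_le hs)
          have h2 : (((∑' i, ‖F i a‖₊) : ℝ≥0) : ℝ≥0∞) = ∑' i, (‖F i a‖₊ : ℝ≥0∞) :=
            ENNReal.coe_tsum hs
          exact h1.trans_eq h2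
      _ = ∑' i, ∫⁻ a, (‖F i a‖₊ : ℝ≥0∞) ∂μ :=
          lintegral_tsum fun i => (hF_int i).aestronglyMeasurable.enorm
      _ < ∞ := lt_top_iff_ne_top.2 (key_lintegral hF_int hF_sum)

lemma aesm_comp (v : α → EuclideanSpace ℝ (Fin m')) (hv : AEStronglyMeasurable v μ) (j : Fin m') :
    AEStronglyMeasurable (fun x => v x j) μ :=
  ((EuclideanSpace.proj j : EuclideanSpace ℝ (Fin m') →L[ℝ] ℝ).continuous.comp_aestronglyMeasurable
    hv)

lemma aesm_matVec {f : α → Matrix (Fin n') (Fin m') ℝ}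
    (hf : ∀ i j, AEStronglyMeasurable (fun x => f x i j) μ)
    {g : α → EuclideanSpace ℝ (Fin m')} (hg : AEStronglyMeasurable g μ) :
    AEStronglyMeasurable (fun x => matVec (f x) (g x)) μ := by
  have heq : (fun x => matVec (f x) (g x))
      = fun x => ∑ i, ((∑ j, f x i j * g x j) • (EuclideanSpace.single i (1 : ℝ))) := by
    funext x
    ext i
    simp only [PiLp.ext_iff] at *
    rw [matVec_apply]
    classical
    have : (∑ i', ((∑ j, f x i' j * g x j) • (EuclideanSpace.single i' (1 : ℝ)))) i
        = ∑ i', (∑ j, f x i' j * g x j) * (EuclideanSpace.single i' (1 : ℝ) i) := by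
      induction (Finset.univ : Finset (Fin n')) using Finset.induction with
      | empty => simp
      | insert j s hj ih => by_cases hij : i = j <;> simp_all [Finset.sum_insert hj]
    rw [this]
    simp [EuclideanSpace.single_apply]
  rw [heq]
  apply Finset.aestronglyMeasurable_fun_sum
  intro i _
  apply AEStronglyMeasurable.smul_const
  exact Finset.aestronglyMeasurable_fun_sum _ fun j _ => (hf i j).mul (aesm_comp g hg j)

lemma memLp_norm_sq_integrable {η : α → EuclideanSpace ℝ (Fin m')} (hη : MemLp η 2 μ) :
    Integrable (fun x => ‖η x‖ ^ 2) μ := by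
  have := hη.integrable_norm_rpow (by norm_num) (by norm_num)
  simpa [ENNReal.toReal_ofNat, Real.rpow_natCast] using this

end MFAux
end AuxHelpers
section Machine
open MeasureTheory Filter
open scoped ENNReal NNReal RealInnerProductSpace

namespace MFAux

variable {Ω' : Type*} [MeasurableSpace Ω'] {P : Measure Ω'} {m : ℕ}
variable {T : Ω' → Matrix (Fin m) (Fin m) ℝ} {η : Ω' → EuclideanSpace ℝ (Fin m)}

lemma frobSq_measurable (hT : ∀ i j, Measurable fun ω => T ω i j) :
    Measurable fun ω => frobSq (T ω) := by
  unfold frobSq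
  exact Finset.measurable_sum _ fun i _ =>
    Finset.measurable_sum _ fun j _ => (hT i j).pow_const 2

lemma frob_aesm (hT : ∀ i j, Measurable fun ω => T ω i j) :
    AEStronglyMeasurable (fun ω => frob (T ω)) P :=
  ((frobSq_measurable hT).sqrt).aestronglyMeasurable

lemma frob_integrable [IsFiniteMeasure P] (hT : ∀ i j, Measurable fun ω => T ω i j)
    (hTint : Integrable (fun ω => frobSq (T ω)) P) :
    Integrable (fun ω => frob (T ω)) P := by
  refine Integrable.mono' ((hTint.add (integrable_const 1)).div_const 2) (frob_aesm hT) ?_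
  filter_upwards with ω
  simp only [Pi.add_apply]
  rw [Real.norm_eq_abs, abs_of_nonneg (frob_nonneg _)]
  nlinarith [frob_sq (T ω), frob_nonneg (T ω), sq_nonneg (frob (T ω) - 1)]

lemma frobMul_integrable (hT : ∀ i j, Measurable fun ω => T ω i j)
    (hTint : Integrable (fun ω => frobSq (T ω)) P) (hηm : AEStronglyMeasurable η P)
    (hη2 : Integrable (fun ω => ‖η ω‖ ^ 2) P) :
    Integrable (fun ω => frob (T ω) * ‖η ω‖) P := by
  refine Integrable.mono' ((hTint.add hη2).div_const 2) ((frob_aesm hT).mul hηm.norm) ?_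
  filter_upwards with ω
  simp only [Pi.add_apply]
  rw [Real.norm_eq_abs, abs_of_nonneg (mul_nonneg (frob_nonneg _) (norm_nonneg _))]
  nlinarith [frob_sq (T ω), sq_nonneg (frob (T ω) - ‖η ω‖)]

lemma matVec_integrable (hT : ∀ i j, Measurable fun ω => T ω i j)
    (hTint : Integrable (fun ω => frobSq (T ω)) P) (hηm : AEStronglyMeasurable η P)
    (hη2 : Integrable (fun ω => ‖η ω‖ ^ 2) P) :
    Integrable (fun ω => matVec (T ω) (η ω)) P := by
  refine Integrable.mono' (frobMul_integrable hT hTint hηm hη2)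
    (aesm_matVec (fun i j => (hT i j).aestronglyMeasurable) hηm) ?_
  filter_upwards with ω using norm_matVec_le _ _

lemma integral_frobMul_le (hT : ∀ i j, Measurable fun ω => T ω i j)
    (hTint : Integrable (fun ω => frobSq (T ω)) P) (hηm : AEStronglyMeasurable η P)
    (hη2 : Integrable (fun ω => ‖η ω‖ ^ 2) P) :
    ∫ ω, frob (T ω) * ‖η ω‖ ∂P
      ≤ Real.sqrt (∫ ω, frobSq (T ω) ∂P) * Real.sqrt (∫ ω, ‖η ω‖ ^ 2 ∂P) := by
  have h := integral_mul_le_sqrt_mul_sqrt (fun ω => frob (T ω)) (fun ω => ‖η ω‖)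
    (fun ω => frob_nonneg _) (fun ω => norm_nonneg _) (frob_aesm hT) hηm.norm
    (by simpa only [frob_sq] using hTint) hη2
  simpa only [frob_sq] using h

lemma norm_integral_matVec_le (hT : ∀ i j, Measurable fun ω => T ω i j)
    (hTint : Integrable (fun ω => frobSq (T ω)) P) (hηm : AEStronglyMeasurable η P)
    (hη2 : Integrable (fun ω => ‖η ω‖ ^ 2) P) :
    ‖∫ ω, matVec (T ω) (η ω) ∂P‖
      ≤ Real.sqrt (∫ ω, frobSq (T ω) ∂P) * Real.sqrt (∫ ω, ‖η ω‖ ^ 2 ∂P) := by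
  refine (norm_integral_le_integral_norm _).trans ?_
  refine le_trans (integral_mono (matVec_integrable hT hTint hηm hη2).norm
    (frobMul_integrable hT hTint hηm hη2) fun ω => norm_matVec_le _ _) ?_
  exact integral_frobMul_le hT hTint hηm hη2

lemma integral_frob_le [IsProbabilityMeasure P] (hT : ∀ i j, Measurable fun ω => T ω i j)
    (hTint : Integrable (fun ω => frobSq (T ω)) P) :
    ∫ ω, frob (T ω) ∂P ≤ Real.sqrt (∫ ω, frobSq (T ω) ∂P) := by
  have h := integral_mul_le_sqrt_mul_sqrt (fun ω => frob (T ω)) (fun _ => (1 : ℝ))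
    (fun ω => frob_nonneg _) (fun _ => zero_le_one) (frob_aesm hT)
    aestronglyMeasurable_const (by simpa only [frob_sq] using hTint)
    (by simpa using (integrable_const (1 : ℝ)))
  simp only [mul_one, one_pow, integral_const, measure_univ, ENNReal.toReal_one, probReal_univ, smul_eq_mul,
    Real.sqrt_one] at h
  simpa only [frob_sq] using h

/-- Key interchange lemma: the inner product of a `tsum` of transposed-matrix actions
against `η`, integrated, equals the sum of inner products against integrals. -/
lemma machine [IsProbabilityMeasure P] (T : ℕ → Ω' → Matrix (Fin m) (Fin m) ℝ)
    (c : ℕ → EuclideanSpace ℝ (Fin m)) (η : Ω' → EuclideanSpace ℝ (Fin m))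
    (hηm : AEStronglyMeasurable η P) (hη2 : Integrable (fun ω => ‖η ω‖ ^ 2) P)
    (hT : ∀ k i j, Measurable fun ω => T k ω i j)
    (hTint : ∀ k, Integrable (fun ω => frobSq (T k ω)) P)
    (hsum : Summable fun k => Real.sqrt (∫ ω, frobSq (T k ω) ∂P) * ‖c k‖) :
    Integrable (fun ω => ⟪∑' k, matVec (T k ω).transpose (c k), η ω⟫) P ∧
    ∫ ω, ⟪∑' k, matVec (T k ω).transpose (c k), η ω⟫ ∂P
      = ∑' k, ⟪c k, ∫ ω, matVec (T k ω) (η ω) ∂P⟫ := by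
  have hJnn : (0:ℝ) ≤ Real.sqrt (∫ ω, ‖η ω‖ ^ 2 ∂P) := Real.sqrt_nonneg _
  set u : ℕ → Ω' → EuclideanSpace ℝ (Fin m) :=
    fun k ω => matVec (T k ω).transpose (c k) with hu
  have hu_aesm : ∀ k, AEStronglyMeasurable (u k) P := fun k =>
    aesm_matVec (fun i j => ((hT k j i).aestronglyMeasurable)) aestronglyMeasurable_const
  have hu_bound : ∀ k ω, ‖u k ω‖ ≤ frob (T k ω) * ‖c k‖ := by
    intro k ω
    have := norm_matVec_le (T k ω).transpose (c k)
    rwa [frob_transpose] at this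
  have hu_int : ∀ k, Integrable (u k) P := by
    intro k
    refine Integrable.mono' ((frob_integrable (hT k) (hTint k)).mul_const ‖c k‖)
      (hu_aesm k) ?_
    filter_upwards with ω using hu_bound k ω
  have hu_norm : ∀ k, ∫ ω, ‖u k ω‖ ∂P ≤ Real.sqrt (∫ ω, frobSq (T k ω) ∂P) * ‖c k‖ := by
    intro k
    have h1 : ∫ ω, ‖u k ω‖ ∂P ≤ ∫ ω, frob (T k ω) * ‖c k‖ ∂P :=
      integral_mono (hu_int k).norm ((frob_integrable (hT k) (hTint k)).mul_const _)
        fun ω => hu_bound k ω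
    rw [integral_mul_const] at h1
    exact h1.trans (mul_le_mul_of_nonneg_right (integral_frob_le (hT k) (hTint k))
      (norm_nonneg _))
  have hu_sum : Summable fun k => ∫ ω, ‖u k ω‖ ∂P :=
    Summable.of_nonneg_of_le (fun k => integral_nonneg fun ω => norm_nonneg _) hu_norm hsum
  have hae_sum : ∀ᵐ ω ∂P, Summable fun k => ‖u k ω‖ := ae_summable_norm hu_int hu_sum
  set g : ℕ → Ω' → ℝ := fun k ω => ⟪u k ω, η ω⟫ with hg
  have hg_aesm : ∀ k, AEStronglyMeasurable (g k) P := fun k => (hu_aesm k).inner hηm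
  have hg_bound : ∀ k ω, ‖g k ω‖ ≤ ‖c k‖ * (frob (T k ω) * ‖η ω‖) := by
    intro k ω
    rw [Real.norm_eq_abs]
    refine (abs_real_inner_le_norm _ _).trans ?_
    have h1 := mul_le_mul_of_nonneg_right (hu_bound k ω) (norm_nonneg (η ω))
    calc ‖u k ω‖ * ‖η ω‖ ≤ frob (T k ω) * ‖c k‖ * ‖η ω‖ := h1
      _ = ‖c k‖ * (frob (T k ω) * ‖η ω‖) := by ring
  have hg_int : ∀ k, Integrable (g k) P := by
    intro k
    refine Integrable.mono' ((frobMul_integrable (hT k) (hTint k) hηm hη2).const_mul ‖c k‖)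
      (hg_aesm k) ?_
    filter_upwards with ω using hg_bound k ω
  have hg_norm : ∀ k, ∫ ω, ‖g k ω‖ ∂P
      ≤ (Real.sqrt (∫ ω, frobSq (T k ω) ∂P) * ‖c k‖) * Real.sqrt (∫ ω, ‖η ω‖ ^ 2 ∂P) := by
    intro k
    have h1 : ∫ ω, ‖g k ω‖ ∂P ≤ ∫ ω, ‖c k‖ * (frob (T k ω) * ‖η ω‖) ∂P :=
      integral_mono (hg_int k).norm
        ((frobMul_integrable (hT k) (hTint k) hηm hη2).const_mul _) fun ω => hg_bound k ω
    rw [integral_const_mul] at h1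
    refine h1.trans ?_
    have h2 := mul_le_mul_of_nonneg_left
      (integral_frobMul_le (hT k) (hTint k) hηm hη2) (norm_nonneg (c k))
    refine h2.trans_eq ?_
    ring
  have hg_sum : Summable fun k => ∫ ω, ‖g k ω‖ ∂P :=
    Summable.of_nonneg_of_le (fun k => integral_nonneg fun ω => norm_nonneg _) hg_norm
      (hsum.mul_right _)
  have heq : ∀ᵐ ω ∂P, ⟪∑' k, u k ω, η ω⟫ = ∑' k, g k ω := by
    filter_upwards [hae_sum] with ω hω
    have hsumm : Summable fun k => u k ω := Summable.of_norm hω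
    rw [real_inner_comm]
    have hmap := ContinuousLinearMap.map_tsum (innerSL ℝ (η ω)) hsumm
    simp only [innerSL_apply_apply] at hmap
    rw [hmap]
    exact tsum_congr fun k => real_inner_comm _ _
  have h_int_tsum : Integrable (fun ω => ∑' k, g k ω) P := integrable_tsum' hg_int hg_sum
  constructor
  · exact h_int_tsum.congr (heq.mono fun ω h => h.symm)
  · rw [integral_congr_ae heq, ← integral_tsum_of_summable_integral_norm hg_int hg_sum]
    refine tsum_congr fun k => ?_
    have : ∀ ω, g k ω = ⟪c k, matVec (T k ω) (η ω)⟫ := fun ω =>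
      inner_matVec_transpose (T k ω) (c k) (η ω)
    simp_rw [this]
    exact integral_inner (matVec_integrable (hT k) (hTint k) hηm hη2) (c k)

end MFAux
end Machine
open scoped Topology

set_option maxHeartbeats 2000000 in
/-- If for a.e. `ω` the block quadratic form
`⟨R(ω)c, c⟩ + 2∑ₖ⟨R̄ₖ(ω)c, dₖ⟩ + ∑ᵢⱼ⟨R̂ᵢⱼ(ω)dⱼ, dᵢ⟩` is `≥ δ|c|²` for all `c` and all
finitely supported `(dₖ)`, then `E[⟨ℛη, η⟩] ≥ δ E[|η|²]` for every `η ∈ L²(Ω; ℝᵐ)`. -/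
theorem meanField_control_weight_coercive
    (m : ℕ) {Ω : Type*} [MeasurableSpace Ω] (P : Measure Ω) [IsProbabilityMeasure P]
    (R : Ω → Matrix (Fin m) (Fin m) ℝ)
    (Rtil Rbar : ℕ → Ω → Matrix (Fin m) (Fin m) ℝ)
    (Rhat : ℕ → ℕ → Ω → Matrix (Fin m) (Fin m) ℝ)
    (hRmeas : ∀ i j, Measurable fun ω => R ω i j)
    (hRbdd : ∃ C : ℝ, ∀ᵐ ω ∂P, frob (R ω) ≤ C)
    (hRtilMeas : ∀ k i j, Measurable fun ω => Rtil k ω i j)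
    (hRbarMeas : ∀ k i j, Measurable fun ω => Rbar k ω i j)
    (hRtilInt : ∀ k, Integrable (fun ω => frobSq (Rtil k ω)) P)
    (hRbarInt : ∀ k, Integrable (fun ω => frobSq (Rbar k ω)) P)
    (hRtilSum : Summable fun k => ∫ ω, frobSq (Rtil k ω) ∂P)
    (hRbarSum : Summable fun k => ∫ ω, frobSq (Rbar k ω) ∂P)
    (hRhatInt : ∀ i j a b, Integrable (fun ω => Rhat i j ω a b) P)
    (hRhatSum : Summable fun p : ℕ × ℕ => frobSq (matExp P (Rhat p.1 p.2)))
    (δ : ℝ) (hδ : 0 < δ)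
    (hpos : ∀ᵐ ω ∂P, ∀ (c : EuclideanSpace ℝ (Fin m)) (d : ℕ → EuclideanSpace ℝ (Fin m)),
      (Function.support d).Finite →
        δ * ‖c‖ ^ 2 ≤ ⟪matVec (R ω) c, c⟫ + 2 * (∑' k, ⟪matVec (Rbar k ω) c, d k⟫) +
          ∑' p : ℕ × ℕ, ⟪matVec (Rhat p.1 p.2 ω) (d p.2), d p.1⟫) :
    ∀ η : Ω → EuclideanSpace ℝ (Fin m), MemLp η 2 P →
      δ * (∫ ω, ‖η ω‖ ^ 2 ∂P) ≤ ∫ ω, ⟪meanFieldR P R Rtil Rbar Rhat η ω, η ω⟫ ∂P := by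
  intro η hη
  classical
  obtain ⟨C, hCae⟩ := hRbdd
  have hηm : AEStronglyMeasurable η P := hη.aestronglyMeasurable
  have hη2 : Integrable (fun ω => ‖η ω‖ ^ 2) P := MFAux.memLp_norm_sq_integrable hη
  set J : ℝ := ∫ ω, ‖η ω‖ ^ 2 ∂P with hJdef
  have hJnn : 0 ≤ J := integral_nonneg fun ω => sq_nonneg _
  set b : ℕ → EuclideanSpace ℝ (Fin m) := fun k => ∫ ω, matVec (Rtil k ω) (η ω) ∂P with hbdef
  set a : ℕ → EuclideanSpace ℝ (Fin m) := fun k => ∫ ω, matVec (Rbar k ω) (η ω) ∂P with hadef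
  set It : ℕ → ℝ := fun k => ∫ ω, frobSq (Rtil k ω) ∂P with hItdef
  set Ib : ℕ → ℝ := fun k => ∫ ω, frobSq (Rbar k ω) ∂P with hIbdef
  have hItnn : ∀ k, 0 ≤ It k := fun k => integral_nonneg fun ω => MFAux.frobSq_nonneg _
  have hIbnn : ∀ k, 0 ≤ Ib k := fun k => integral_nonneg fun ω => MFAux.frobSq_nonneg _
  have hItSum : Summable It := by rw [hItdef]; exact hRtilSum
  have hIbSum : Summable Ib := by rw [hIbdef]; exact hRbarSum
  -- bounds on a, b
  have hbb : ∀ k, ‖b k‖ ≤ Real.sqrt (It k) * Real.sqrt J := by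
    intro k
    rw [hbdef, hItdef, hJdef]
    exact MFAux.norm_integral_matVec_le (hRtilMeas k) (hRtilInt k) hηm hη2
  have haa : ∀ k, ‖a k‖ ≤ Real.sqrt (Ib k) * Real.sqrt J := by
    intro k
    rw [hadef, hIbdef, hJdef]
    exact MFAux.norm_integral_matVec_le (hRbarMeas k) (hRbarInt k) hηm hη2
  have hbsq : Summable fun k => ‖b k‖ ^ 2 := by
    refine Summable.of_nonneg_of_le (fun k => sq_nonneg _) (fun k => ?_) (hItSum.mul_right J)
    have h1 : ‖b k‖ ^ 2 ≤ (Real.sqrt (It k) * Real.sqrt J) ^ 2 := by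
      have := hbb k
      nlinarith [norm_nonneg (b k)]
    refine h1.trans_eq ?_
    rw [mul_pow, Real.sq_sqrt (hItnn k), Real.sq_sqrt hJnn]
  have hasq : Summable fun k => ‖a k‖ ^ 2 := by
    refine Summable.of_nonneg_of_le (fun k => sq_nonneg _) (fun k => ?_) (hIbSum.mul_right J)
    have h1 : ‖a k‖ ^ 2 ≤ (Real.sqrt (Ib k) * Real.sqrt J) ^ 2 := by
      have := haa k
      nlinarith [norm_nonneg (a k)]
    refine h1.trans_eq ?_
    rw [mul_pow, Real.sq_sqrt (hIbnn k), Real.sq_sqrt hJnn]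
  -- the three tsum terms of the operator
  set e : ℕ ≃ ℕ × ℕ := (Denumerable.eqv (ℕ × ℕ)).symm with hedef
  set cD : ℕ → EuclideanSpace ℝ (Fin m) :=
    fun n => matVec (matExp P (Rhat (e n).1 (e n).2)) (b (e n).2) with hcDdef
  -- summability hypotheses for the machine
  have hsumB : Summable fun k => Real.sqrt (It k) * ‖a k‖ := by
    refine Summable.of_nonneg_of_le
      (fun k => mul_nonneg (Real.sqrt_nonneg _) (norm_nonneg _)) (fun k => ?_)
      ((hItSum.add hasq).div_const 2)
    have h1 : Real.sqrt (It k) ^ 2 = It k := Real.sq_sqrt (hItnn k)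
    nlinarith [sq_nonneg (Real.sqrt (It k) - ‖a k‖)]
  have hsumC : Summable fun k => Real.sqrt (Ib k) * ‖b k‖ := by
    refine Summable.of_nonneg_of_le
      (fun k => mul_nonneg (Real.sqrt_nonneg _) (norm_nonneg _)) (fun k => ?_)
      ((hIbSum.add hbsq).div_const 2)
    have h1 : Real.sqrt (Ib k) ^ 2 = Ib k := Real.sq_sqrt (hIbnn k)
    nlinarith [sq_nonneg (Real.sqrt (Ib k) - ‖b k‖)]
  have hFSum : Summable fun p : ℕ × ℕ =>
      (frobSq (matExp P (Rhat p.1 p.2)) + It p.1 * ‖b p.2‖ ^ 2) / 2 := by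
    refine Summable.div_const ?_ 2
    exact hRhatSum.add (hItSum.mul_of_nonneg hbsq (fun k => hItnn k) (fun k => sq_nonneg _))
  have hsumD : Summable fun n => Real.sqrt (It (e n).1) * ‖cD n‖ := by
    have hcomp : Summable fun n =>
        (frobSq (matExp P (Rhat (e n).1 (e n).2)) + It (e n).1 * ‖b (e n).2‖ ^ 2) / 2 :=
      ((Equiv.summable_iff e).2 hFSum)
    refine Summable.of_nonneg_of_le
      (fun n => mul_nonneg (Real.sqrt_nonneg _) (norm_nonneg _)) (fun n => ?_) hcomp
    have h1 : ‖cD n‖ ≤ frob (matExp P (Rhat (e n).1 (e n).2)) * ‖b (e n).2‖ := by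
      rw [hcDdef]
      exact MFAux.norm_matVec_le _ _
    have h2 : Real.sqrt (It (e n).1) ^ 2 = It (e n).1 := Real.sq_sqrt (hItnn _)
    have h3 : frob (matExp P (Rhat (e n).1 (e n).2)) ^ 2
        = frobSq (matExp P (Rhat (e n).1 (e n).2)) := MFAux.frob_sq _
    nlinarith [Real.sqrt_nonneg (It (e n).1), norm_nonneg (cD n), norm_nonneg (b (e n).2),
      MFAux.frob_nonneg (matExp P (Rhat (e n).1 (e n).2)),
      sq_nonneg (frob (matExp P (Rhat (e n).1 (e n).2)) - Real.sqrt (It (e n).1) * ‖b (e n).2‖),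
      mul_le_mul_of_nonneg_left h1 (Real.sqrt_nonneg (It (e n).1))]
  -- machine applications
  have hB := MFAux.machine Rtil a η hηm hη2 hRtilMeas hRtilInt (by
    have : ∀ k, Real.sqrt (∫ ω, frobSq (Rtil k ω) ∂P) = Real.sqrt (It k) := fun k => by
      rw [hItdef]
    simpa [this] using hsumB)
  have hC := MFAux.machine Rbar b η hηm hη2 hRbarMeas hRbarInt (by
    have : ∀ k, Real.sqrt (∫ ω, frobSq (Rbar k ω) ∂P) = Real.sqrt (Ib k) := fun k => by
      rw [hIbdef]
    simpa [this] using hsumC)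
  have hD := MFAux.machine (fun n => Rtil (e n).1) cD η hηm hη2
    (fun n => hRtilMeas (e n).1) (fun n => hRtilInt (e n).1) (by
    have : ∀ n, Real.sqrt (∫ ω, frobSq (Rtil (e n).1 ω) ∂P) = Real.sqrt (It (e n).1) :=
      fun n => by rw [hItdef]
    simpa [this] using hsumD)
  -- convert the D-term integrability/value to the ℕ×ℕ indexed form
  have heqD : (fun ω => ⟪∑' n : ℕ, matVec (Rtil (e n).1 ω).transpose (cD n), η ω⟫)
      = fun ω => ⟪∑' p : ℕ × ℕ, matVec (Rtil p.1 ω).transpose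
          (matVec (matExp P (Rhat p.1 p.2)) (b p.2)), η ω⟫ := by
    funext ω
    congr 1
    exact Equiv.tsum_eq e fun p => matVec (Rtil p.1 ω).transpose
      (matVec (matExp P (Rhat p.1 p.2)) (b p.2))
  have hDint : Integrable (fun ω => ⟪∑' p : ℕ × ℕ, matVec (Rtil p.1 ω).transpose
      (matVec (matExp P (Rhat p.1 p.2)) (b p.2)), η ω⟫) P := heqD ▸ hD.1
  have hDval : ∫ ω, ⟪∑' p : ℕ × ℕ, matVec (Rtil p.1 ω).transpose
      (matVec (matExp P (Rhat p.1 p.2)) (b p.2)), η ω⟫ ∂P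
      = ∑' p : ℕ × ℕ, ⟪matVec (matExp P (Rhat p.1 p.2)) (b p.2), b p.1⟫ := by
    rw [← heqD, hD.2]
    have h1 : ∀ n, ⟪cD n, ∫ ω, matVec (Rtil (e n).1 ω) (η ω) ∂P⟫
        = ⟪matVec (matExp P (Rhat (e n).1 (e n).2)) (b (e n).2), b (e n).1⟫ := fun n => rfl
    rw [tsum_congr h1]
    exact Equiv.tsum_eq e fun p => ⟪matVec (matExp P (Rhat p.1 p.2)) (b p.2), b p.1⟫
  have hBval : ∫ ω, ⟪∑' k, matVec (Rtil k ω).transpose (a k), η ω⟫ ∂P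
      = ∑' k, ⟪a k, b k⟫ := hB.2
  have hCval : ∫ ω, ⟪∑' k, matVec (Rbar k ω).transpose (b k), η ω⟫ ∂P
      = ∑' k, ⟪a k, b k⟫ := by
    rw [hC.2]
    exact tsum_congr fun k => real_inner_comm _ _
  -- integrability of the first term
  have hA_int : Integrable (fun ω => ⟪matVec (R ω) (η ω), η ω⟫) P := by
    refine Integrable.mono' (hη2.const_mul (max C 0))
      ((MFAux.aesm_matVec (fun i j => (hRmeas i j).aestronglyMeasurable) hηm).inner hηm) ?_
    filter_upwards [hCae] with ω hω
    rw [Real.norm_eq_abs]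
    have h1 := MFAux.abs_inner_matVec_le (R ω) (η ω) (η ω)
    have h2 : frob (R ω) ≤ max C 0 := le_trans hω (le_max_left _ _)
    nlinarith [norm_nonneg (η ω), MFAux.frob_nonneg (R ω)]
  -- splitting of the operator
  have hsplit : (fun ω => ⟪meanFieldR P R Rtil Rbar Rhat η ω, η ω⟫)
      = fun ω => ⟪matVec (R ω) (η ω), η ω⟫
        + ⟪∑' k, matVec (Rtil k ω).transpose (a k), η ω⟫
        + ⟪∑' k, matVec (Rbar k ω).transpose (b k), η ω⟫
        + ⟪∑' p : ℕ × ℕ, matVec (Rtil p.1 ω).transpose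
            (matVec (matExp P (Rhat p.1 p.2)) (b p.2)), η ω⟫ := by
    funext ω
    show ⟪matVec (R ω) (η ω) + (∑' k, matVec (Rtil k ω).transpose (a k))
        + (∑' k, matVec (Rbar k ω).transpose (b k))
        + ∑' p : ℕ × ℕ, matVec (Rtil p.1 ω).transpose
            (matVec (matExp P (Rhat p.1 p.2)) (b p.2)), η ω⟫ = _
    rw [inner_add_left, inner_add_left, inner_add_left]
  have hIdent : ∫ ω, ⟪meanFieldR P R Rtil Rbar Rhat η ω, η ω⟫ ∂P
      = (∫ ω, ⟪matVec (R ω) (η ω), η ω⟫ ∂P) + (∑' k, ⟪a k, b k⟫) + (∑' k, ⟪a k, b k⟫)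
        + ∑' p : ℕ × ℕ, ⟪matVec (matExp P (Rhat p.1 p.2)) (b p.2), b p.1⟫ := by
    have h12 : Integrable (fun ω => ⟪matVec (R ω) (η ω), η ω⟫
        + ⟪∑' k, matVec (Rtil k ω).transpose (a k), η ω⟫) P := hA_int.add hB.1
    have h123 : Integrable (fun ω => ⟪matVec (R ω) (η ω), η ω⟫
        + ⟪∑' k, matVec (Rtil k ω).transpose (a k), η ω⟫
        + ⟪∑' k, matVec (Rbar k ω).transpose (b k), η ω⟫) P := h12.add hC.1
    rw [hsplit, integral_add h123 hDint, integral_add h12 hC.1,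
      integral_add hA_int hB.1, hBval, hCval, hDval]
  -- integrability and values of the approximating terms
  have hBk_int : ∀ k, Integrable (fun ω => ⟪matVec (Rbar k ω) (η ω), b k⟫) P := by
    intro k
    refine Integrable.mono'
      ((MFAux.frobMul_integrable (hRbarMeas k) (hRbarInt k) hηm hη2).mul_const ‖b k‖)
      ((MFAux.aesm_matVec (fun i j => (hRbarMeas k i j).aestronglyMeasurable) hηm).inner
        aestronglyMeasurable_const) ?_
    filter_upwards with ω
    rw [Real.norm_eq_abs]
    exact MFAux.abs_inner_matVec_le _ _ _
  have hBk_val : ∀ k, ∫ ω, ⟪matVec (Rbar k ω) (η ω), b k⟫ ∂P = ⟪a k, b k⟫ := by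
    intro k
    have h1 : (fun ω => ⟪matVec (Rbar k ω) (η ω), b k⟫)
        = fun ω => ⟪b k, matVec (Rbar k ω) (η ω)⟫ := funext fun ω => real_inner_comm _ _
    rw [h1, integral_inner (MFAux.matVec_integrable (hRbarMeas k) (hRbarInt k) hηm hη2) (b k)]
    exact real_inner_comm _ _
  have hQp_expand : ∀ p : ℕ × ℕ, (fun ω => ⟪matVec (Rhat p.1 p.2 ω) (b p.2), b p.1⟫)
      = fun ω => ∑ i, ∑ j, Rhat p.1 p.2 ω i j * b p.2 j * b p.1 i := by
    intro p
    funext ω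
    rw [MFAux.inner_matVec]
    exact Finset.sum_congr rfl fun i _ => Finset.sum_mul _ _ _
  have hQp_int : ∀ p : ℕ × ℕ,
      Integrable (fun ω => ⟪matVec (Rhat p.1 p.2 ω) (b p.2), b p.1⟫) P := by
    intro p
    rw [hQp_expand p]
    exact integrable_finset_sum _ fun i _ => integrable_finset_sum _ fun j _ =>
      ((hRhatInt p.1 p.2 i j).mul_const _).mul_const _
  have hQp_val : ∀ p : ℕ × ℕ, ∫ ω, ⟪matVec (Rhat p.1 p.2 ω) (b p.2), b p.1⟫ ∂P
      = ⟪matVec (matExp P (Rhat p.1 p.2)) (b p.2), b p.1⟫ := by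
    intro p
    rw [hQp_expand p, integral_finset_sum _ (fun i _ => integrable_finset_sum _ fun j _ =>
      ((hRhatInt p.1 p.2 i j).mul_const _).mul_const _), MFAux.inner_matVec]
    refine Finset.sum_congr rfl fun i _ => ?_
    rw [integral_finset_sum _ (fun j _ => ((hRhatInt p.1 p.2 i j).mul_const _).mul_const _),
      Finset.sum_mul]
    refine Finset.sum_congr rfl fun j _ => ?_
    rw [integral_mul_const, integral_mul_const]
    rfl
  -- the finite-rank inequality
  have hineqN : ∀ N : ℕ, δ * J ≤ (∫ ω, ⟪matVec (R ω) (η ω), η ω⟫ ∂P)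
      + 2 * (∑ k ∈ Finset.range N, ⟪a k, b k⟫)
      + ∑ p ∈ Finset.range N ×ˢ Finset.range N,
          ⟪matVec (matExp P (Rhat p.1 p.2)) (b p.2), b p.1⟫ := by
    intro N
    have hdfin : (Function.support fun k => if k < N then b k else 0).Finite := by
      apply Set.Finite.subset (Finset.range N).finite_toSet
      intro k hk
      simp only [Function.mem_support] at hk
      simp only [Finset.coe_range, Set.mem_Iio]
      by_contra hkN
      exact hk (if_neg hkN)
    have hpt : ∀ᵐ ω ∂P, δ * ‖η ω‖ ^ 2 ≤ ⟪matVec (R ω) (η ω), η ω⟫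
        + 2 * (∑ k ∈ Finset.range N, ⟪matVec (Rbar k ω) (η ω), b k⟫)
        + ∑ p ∈ Finset.range N ×ˢ Finset.range N,
            ⟪matVec (Rhat p.1 p.2 ω) (b p.2), b p.1⟫ := by
      filter_upwards [hpos] with ω hω
      have h := hω (η ω) (fun k => if k < N then b k else 0) hdfin
      have h1 : (∑' k, ⟪matVec (Rbar k ω) (η ω), if k < N then b k else 0⟫)
          = ∑ k ∈ Finset.range N, ⟪matVec (Rbar k ω) (η ω), b k⟫ := by
        rw [tsum_eq_sum (s := Finset.range N) (f := fun k =>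
            ⟪matVec (Rbar k ω) (η ω), if k < N then b k else 0⟫)
          (fun k hk => by
            show ⟪matVec (Rbar k ω) (η ω), if k < N then b k else 0⟫ = 0
            rw [if_neg (fun hlt => hk (Finset.mem_range.2 hlt))]
            exact inner_zero_right _)]
        exact Finset.sum_congr rfl fun k hk => by rw [if_pos (Finset.mem_range.mp hk)]
      have h2 : (∑' p : ℕ × ℕ, ⟪matVec (Rhat p.1 p.2 ω) (if p.2 < N then b p.2 else 0),
            if p.1 < N then b p.1 else 0⟫)
          = ∑ p ∈ Finset.range N ×ˢ Finset.range N,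
              ⟪matVec (Rhat p.1 p.2 ω) (b p.2), b p.1⟫ := by
        rw [tsum_eq_sum (s := Finset.range N ×ˢ Finset.range N) (f := fun p : ℕ × ℕ =>
            ⟪matVec (Rhat p.1 p.2 ω) (if p.2 < N then b p.2 else 0),
              if p.1 < N then b p.1 else 0⟫)
          (fun p hp => by
            show ⟪matVec (Rhat p.1 p.2 ω) (if p.2 < N then b p.2 else 0),
              if p.1 < N then b p.1 else 0⟫ = 0
            by_cases hp2 : p.2 < N
            · have hp1 : ¬ p.1 < N := fun hp1 => hp (Finset.mem_product.2
                ⟨Finset.mem_range.2 hp1, Finset.mem_range.2 hp2⟩)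
              rw [if_neg hp1]
              exact inner_zero_right _
            · rw [if_neg hp2, MFAux.matVec_zero]
              exact inner_zero_left _)]
        refine Finset.sum_congr rfl fun p hp => ?_
        obtain ⟨hp1, hp2⟩ := Finset.mem_product.mp hp
        rw [if_pos (Finset.mem_range.mp hp1), if_pos (Finset.mem_range.mp hp2)]
      rw [h1, h2] at h
      exact h
    have hsum1 : Integrable (fun ω =>
        2 * (∑ k ∈ Finset.range N, ⟪matVec (Rbar k ω) (η ω), b k⟫)) P :=
      (integrable_finset_sum _ fun k _ => hBk_int k).const_mul 2
    have hsum2 : Integrable (fun ω => ∑ p ∈ Finset.range N ×ˢ Finset.range N,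
        ⟪matVec (Rhat p.1 p.2 ω) (b p.2), b p.1⟫) P :=
      integrable_finset_sum _ fun p _ => hQp_int p
    have hI12 : Integrable (fun ω => ⟪matVec (R ω) (η ω), η ω⟫
        + 2 * ∑ k ∈ Finset.range N, ⟪matVec (Rbar k ω) (η ω), b k⟫) P := hA_int.add hsum1
    have hI123 : Integrable (fun ω => ⟪matVec (R ω) (η ω), η ω⟫
        + 2 * ∑ k ∈ Finset.range N, ⟪matVec (Rbar k ω) (η ω), b k⟫
        + ∑ p ∈ Finset.range N ×ˢ Finset.range N,
            ⟪matVec (Rhat p.1 p.2 ω) (b p.2), b p.1⟫) P := hI12.add hsum2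
    have hmono := integral_mono_ae (hη2.const_mul δ) hI123 hpt
    rw [integral_const_mul, integral_add hI12 hsum2,
      integral_add hA_int hsum1, integral_const_mul,
      integral_finset_sum _ (fun k _ => hBk_int k),
      integral_finset_sum _ (fun p _ => hQp_int p)] at hmono
    calc δ * J = δ * ∫ ω, ‖η ω‖ ^ 2 ∂P := by rw [hJdef]
      _ ≤ _ := hmono.trans_eq (by
          rw [Finset.sum_congr rfl fun k _ => hBk_val k,
            Finset.sum_congr rfl fun p _ => hQp_val p])
  -- summability of the limit series
  have hSsum : Summable fun k => ⟪a k, b k⟫ := by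
    refine Summable.of_norm (Summable.of_nonneg_of_le (fun k => norm_nonneg _) (fun k => ?_)
      ((hasq.add hbsq).div_const 2))
    rw [Real.norm_eq_abs]
    have h1 := abs_real_inner_le_norm (a k) (b k)
    nlinarith [sq_nonneg (‖a k‖ - ‖b k‖)]
  have hQsum : Summable fun p : ℕ × ℕ => ⟪matVec (matExp P (Rhat p.1 p.2)) (b p.2), b p.1⟫ := by
    refine Summable.of_norm (Summable.of_nonneg_of_le (fun p => norm_nonneg _) (fun p => ?_)
      ((hRhatSum.add (hbsq.mul_of_nonneg hbsq (fun k => sq_nonneg _)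
        (fun k => sq_nonneg _))).div_const 2))
    rw [Real.norm_eq_abs]
    have h1 := MFAux.abs_inner_matVec_le (matExp P (Rhat p.1 p.2)) (b p.2) (b p.1)
    have h2 := MFAux.frob_sq (matExp P (Rhat p.1 p.2))
    nlinarith [sq_nonneg (frob (matExp P (Rhat p.1 p.2)) - ‖b p.2‖ * ‖b p.1‖),
      norm_nonneg (b p.1), norm_nonneg (b p.2), MFAux.frob_nonneg (matExp P (Rhat p.1 p.2))]
  have hprod : Tendsto (fun N => Finset.range N ×ˢ Finset.range N) atTop atTop := by
    apply Filter.tendsto_atTop_finset_of_monotone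
    · intro M N h
      exact Finset.product_subset_product (Finset.range_subset_range.2 h) (Finset.range_subset_range.2 h)
    · intro p
      exact ⟨max p.1 p.2 + 1, Finset.mem_product.2
        ⟨Finset.mem_range.2 (Nat.lt_succ_of_le (le_max_left _ _)),
         Finset.mem_range.2 (Nat.lt_succ_of_le (le_max_right _ _))⟩⟩
  have hQtend : Tendsto (fun N => ∑ p ∈ Finset.range N ×ˢ Finset.range N,
      ⟪matVec (matExp P (Rhat p.1 p.2)) (b p.2), b p.1⟫) atTop
      (𝓝 (∑' p : ℕ × ℕ, ⟪matVec (matExp P (Rhat p.1 p.2)) (b p.2), b p.1⟫)) :=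
    hQsum.hasSum.comp hprod
  have hStend : Tendsto (fun N => ∑ k ∈ Finset.range N, ⟪a k, b k⟫) atTop
      (𝓝 (∑' k, ⟪a k, b k⟫)) := hSsum.hasSum.tendsto_sum_nat
  have htend : Tendsto (fun N => (∫ ω, ⟪matVec (R ω) (η ω), η ω⟫ ∂P)
      + 2 * (∑ k ∈ Finset.range N, ⟪a k, b k⟫)
      + ∑ p ∈ Finset.range N ×ˢ Finset.range N,
          ⟪matVec (matExp P (Rhat p.1 p.2)) (b p.2), b p.1⟫) atTop
      (𝓝 ((∫ ω, ⟪matVec (R ω) (η ω), η ω⟫ ∂P) + 2 * (∑' k, ⟪a k, b k⟫)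
        + ∑' p : ℕ × ℕ, ⟪matVec (matExp P (Rhat p.1 p.2)) (b p.2), b p.1⟫)) :=
    (tendsto_const_nhds.add (hStend.const_mul 2)).add hQtend
  have hfin : δ * J ≤ (∫ ω, ⟪matVec (R ω) (η ω), η ω⟫ ∂P) + 2 * (∑' k, ⟪a k, b k⟫)
      + ∑' p : ℕ × ℕ, ⟪matVec (matExp P (Rhat p.1 p.2)) (b p.2), b p.1⟫ :=
    ge_of_tendsto' htend hineqN
  rw [hIdent]
  linarith [hfin]
end
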